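/- A labeled relation web is isomorphic (as a labeled mixed graph) to the translation ⟦F⟧ of some formula F if and only if it is modal. -/

import Mathlib

/-! # Formulas of multiplicative exponential linear logic with the placeholder `∘` -/

inductive Formula where
  | atom  : ℕ → Formula
  | natom : ℕ → Formula
  | parr  : Formula → Formula → Formula
  | tens  : Formula → Formula → Formula
  | bang  : Formula → Formula
  | quest : Formula → Formula
  | bot   : Formula
  | one   : Formula
  | hole  : Formula
  deriving DecidableEq

namespace Formula

/-- A MELL-formula: a formula with no occurrence of the placeholder `∘`. -/
def isMELL : Formula → Prop
  | atom _   => True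
  | natom _  => True
  | parr A B => isMELL A ∧ isMELL B
  | tens A B => isMELL A ∧ isMELL B
  | bang A   => isMELL A
  | quest A  => isMELL A
  | bot      => True
  | one      => True
  | hole     => False

/-- A formula without modalities (no `!` and no `?`). -/
def noMod : Formula → Prop
  | atom _   => True
  | natom _  => True
  | parr A B => noMod A ∧ noMod B
  | tens A B => noMod A ∧ noMod B
  | bang _   => False
  | quest _  => False
  | bot      => True
  | one      => True
  | hole     => True

/-- A formula of multiplicative linear logic with units:
built from atoms, dual atoms, `⊗`, `⅋`, `1`, `⊥`; no `∘`, `!`, `?`. -/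
def isMLLu : Formula → Prop
  | atom _   => True
  | natom _  => True
  | parr A B => isMLLu A ∧ isMLLu B
  | tens A B => isMLLu A ∧ isMLLu B
  | bang _   => False
  | quest _  => False
  | bot      => True
  | one      => True
  | hole     => False

/-- Linear negation, defined through the De Morgan laws. -/
def dual : Formula → Formula
  | atom a   => natom a
  | natom a  => atom a
  | parr A B => tens (dual A) (dual B)
  | tens A B => parr (dual A) (dual B)
  | bang A   => quest (dual A)
  | quest A  => bang (dual A)
  | bot      => one
  | one      => bot
  | hole     => hole

/-- `questN n F` is `?ⁿ F`. -/
def questN : ℕ → Formula → Formula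
  | 0,     A => A
  | n + 1, A => quest (questN n A)

/-- A weaken-contradiction: a formula `?ⁿ(A ⊗ Ā)` with `A` a MELL-formula. -/
def isWeakenContradiction (C : Formula) : Prop :=
  ∃ (n : ℕ) (A : Formula), A.isMELL ∧ C = questN n (tens A (dual A))

end Formula

/-- A sequent is a (non-empty) multiset of formulas. -/
abbrev Sequent := Multiset Formula

/-! ## Sequent systems -/

/-- The system MLL = {ax, ⊗, ⅋} (it coincides with the linear system MLLˡ). -/
inductive ProvMLL : Sequent → Prop
  | ax (a : ℕ) : ProvMLL {Formula.atom a, Formula.natom a}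
  | parr (Γ : Sequent) (A B : Formula) :
      ProvMLL (A ::ₘ B ::ₘ Γ) → ProvMLL (Formula.parr A B ::ₘ Γ)
  | tens (Γ Δ : Sequent) (A B : Formula) :
      ProvMLL (A ::ₘ Γ) → ProvMLL (B ::ₘ Δ) →
      ProvMLL (Formula.tens A B ::ₘ (Γ + Δ))

/-- The system MLLu = {ax, ⊗, ⅋, ⊥, 1}. -/
inductive ProvMLLu : Sequent → Prop
  | ax (a : ℕ) : ProvMLLu {Formula.atom a, Formula.natom a}
  | parr (Γ : Sequent) (A B : Formula) :
      ProvMLLu (A ::ₘ B ::ₘ Γ) → ProvMLLu (Formula.parr A B ::ₘ Γ)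
  | tens (Γ Δ : Sequent) (A B : Formula) :
      ProvMLLu (A ::ₘ Γ) → ProvMLLu (B ::ₘ Δ) →
      ProvMLLu (Formula.tens A B ::ₘ (Γ + Δ))
  | bot (Γ : Sequent) : ProvMLLu Γ → ProvMLLu (Formula.bot ::ₘ Γ)
  | one : ProvMLLu {Formula.one}

/-- The system MELL = {ax, ⊗, ⅋, ⊥, 1, !p, der, w?, c?}. -/
inductive ProvMELL : Sequent → Prop
  | ax (a : ℕ) : ProvMELL {Formula.atom a, Formula.natom a}
  | parr (Γ : Sequent) (A B : Formula) :
      ProvMELL (A ::ₘ B ::ₘ Γ) → ProvMELL (Formula.parr A B ::ₘ Γ)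
  | tens (Γ Δ : Sequent) (A B : Formula) :
      ProvMELL (A ::ₘ Γ) → ProvMELL (B ::ₘ Δ) →
      ProvMELL (Formula.tens A B ::ₘ (Γ + Δ))
  | bot (Γ : Sequent) : ProvMELL Γ → ProvMELL (Formula.bot ::ₘ Γ)
  | one : ProvMELL {Formula.one}
  | prom (Γ : Sequent) (A : Formula) :
      ProvMELL (A ::ₘ Γ.map Formula.quest) →
      ProvMELL (Formula.bang A ::ₘ Γ.map Formula.quest)
  | der (Γ : Sequent) (A : Formula) :
      ProvMELL (A ::ₘ Γ) → ProvMELL (Formula.quest A ::ₘ Γ)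
  | weak (Γ : Sequent) (A : Formula) :
      ProvMELL Γ → ProvMELL (Formula.quest A ::ₘ Γ)
  | contr (Γ : Sequent) (A : Formula) :
      ProvMELL (Formula.quest A ::ₘ Formula.quest A ::ₘ Γ) →
      ProvMELL (Formula.quest A ::ₘ Γ)

/-- The system MLLu^j = {ax_j, 1_j, ⊥^j, ⅋, ⊗}. -/
inductive ProvMLLuj : Sequent → Prop
  | axj (a n : ℕ) :
      ProvMLLuj (Formula.atom a ::ₘ Formula.natom a ::ₘ Multiset.replicate n Formula.hole)
  | onej (n : ℕ) : ProvMLLuj (Formula.one ::ₘ Multiset.replicate n Formula.hole)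
  | botj (Γ : Sequent) :
      ProvMLLuj (Formula.hole ::ₘ Γ) → ProvMLLuj (Formula.bot ::ₘ Γ)
  | parr (Γ : Sequent) (A B : Formula) :
      ProvMLLuj (A ::ₘ B ::ₘ Γ) → ProvMLLuj (Formula.parr A B ::ₘ Γ)
  | tens (Γ Δ : Sequent) (A B : Formula) :
      ProvMLLuj (A ::ₘ Γ) → ProvMLLuj (B ::ₘ Δ) →
      ProvMLLuj (Formula.tens A B ::ₘ (Γ + Δ))

/-- The system MELL^j = {ax_j, 1_j, ⊥^j, w^j, ⅋, ⊗, w!p, der, dig?, dig∘, c?}. -/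
inductive ProvMELLj : Sequent → Prop
  | axj (a n : ℕ) :
      ProvMELLj (Formula.atom a ::ₘ Formula.natom a ::ₘ Multiset.replicate n Formula.hole)
  | onej (n : ℕ) : ProvMELLj (Formula.one ::ₘ Multiset.replicate n Formula.hole)
  | botj (Γ : Sequent) :
      ProvMELLj (Formula.hole ::ₘ Γ) → ProvMELLj (Formula.bot ::ₘ Γ)
  | wj (Γ : Sequent) (A : Formula) :
      ProvMELLj (Formula.hole ::ₘ Γ) → ProvMELLj (Formula.quest A ::ₘ Γ)
  | parr (Γ : Sequent) (A B : Formula) :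
      ProvMELLj (A ::ₘ B ::ₘ Γ) → ProvMELLj (Formula.parr A B ::ₘ Γ)
  | tens (Γ Δ : Sequent) (A B : Formula) :
      ProvMELLj (A ::ₘ Γ) → ProvMELLj (B ::ₘ Δ) →
      ProvMELLj (Formula.tens A B ::ₘ (Γ + Δ))
  | wprom (Γ : Sequent) (A : Formula) :
      ProvMELLj (A ::ₘ Γ) → ProvMELLj (Formula.bang A ::ₘ Γ.map Formula.quest)
  | der (Γ : Sequent) (A : Formula) :
      ProvMELLj (A ::ₘ Γ) → ProvMELLj (Formula.quest A ::ₘ Γ)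
  | dig (Γ : Sequent) (A : Formula) :
      ProvMELLj (Formula.quest (Formula.quest A) ::ₘ Γ) →
      ProvMELLj (Formula.quest A ::ₘ Γ)
  | digo (Γ : Sequent) :
      ProvMELLj (Formula.quest Formula.hole ::ₘ Γ) → ProvMELLj (Formula.hole ::ₘ Γ)
  | contr (Γ : Sequent) (A : Formula) :
      ProvMELLj (Formula.quest A ::ₘ Formula.quest A ::ₘ Γ) →
      ProvMELLj (Formula.quest A ::ₘ Γ)

/-- The system MELL^j extended with the cut rule (cut formulas are MELL-formulas). -/
inductive ProvMELLjCut : Sequent → Prop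
  | axj (a n : ℕ) :
      ProvMELLjCut (Formula.atom a ::ₘ Formula.natom a ::ₘ Multiset.replicate n Formula.hole)
  | onej (n : ℕ) : ProvMELLjCut (Formula.one ::ₘ Multiset.replicate n Formula.hole)
  | botj (Γ : Sequent) :
      ProvMELLjCut (Formula.hole ::ₘ Γ) → ProvMELLjCut (Formula.bot ::ₘ Γ)
  | wj (Γ : Sequent) (A : Formula) :
      ProvMELLjCut (Formula.hole ::ₘ Γ) → ProvMELLjCut (Formula.quest A ::ₘ Γ)
  | parr (Γ : Sequent) (A B : Formula) :
      ProvMELLjCut (A ::ₘ B ::ₘ Γ) → ProvMELLjCut (Formula.parr A B ::ₘ Γ)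
  | tens (Γ Δ : Sequent) (A B : Formula) :
      ProvMELLjCut (A ::ₘ Γ) → ProvMELLjCut (B ::ₘ Δ) →
      ProvMELLjCut (Formula.tens A B ::ₘ (Γ + Δ))
  | wprom (Γ : Sequent) (A : Formula) :
      ProvMELLjCut (A ::ₘ Γ) → ProvMELLjCut (Formula.bang A ::ₘ Γ.map Formula.quest)
  | der (Γ : Sequent) (A : Formula) :
      ProvMELLjCut (A ::ₘ Γ) → ProvMELLjCut (Formula.quest A ::ₘ Γ)
  | dig (Γ : Sequent) (A : Formula) :
      ProvMELLjCut (Formula.quest (Formula.quest A) ::ₘ Γ) →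
      ProvMELLjCut (Formula.quest A ::ₘ Γ)
  | digo (Γ : Sequent) :
      ProvMELLjCut (Formula.quest Formula.hole ::ₘ Γ) → ProvMELLjCut (Formula.hole ::ₘ Γ)
  | contr (Γ : Sequent) (A : Formula) :
      ProvMELLjCut (Formula.quest A ::ₘ Formula.quest A ::ₘ Γ) →
      ProvMELLjCut (Formula.quest A ::ₘ Γ)
  | cut (Γ Δ : Sequent) (A : Formula) :
      A.isMELL → ProvMELLjCut (A ::ₘ Γ) → ProvMELLjCut (A.dual ::ₘ Δ) →
      ProvMELLjCut (Γ + Δ)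

/-- The linear system MLLu^ℓ = {ax_j, 1_j, ⅋, ⊗}. -/
inductive ProvMLLuLin : Sequent → Prop
  | axj (a n : ℕ) :
      ProvMLLuLin (Formula.atom a ::ₘ Formula.natom a ::ₘ Multiset.replicate n Formula.hole)
  | onej (n : ℕ) : ProvMLLuLin (Formula.one ::ₘ Multiset.replicate n Formula.hole)
  | parr (Γ : Sequent) (A B : Formula) :
      ProvMLLuLin (A ::ₘ B ::ₘ Γ) → ProvMLLuLin (Formula.parr A B ::ₘ Γ)
  | tens (Γ Δ : Sequent) (A B : Formula) :
      ProvMLLuLin (A ::ₘ Γ) → ProvMLLuLin (B ::ₘ Δ) →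
      ProvMLLuLin (Formula.tens A B ::ₘ (Γ + Δ))

/-- The linear system MELL^ℓ = {ax_j, 1_j, ⅋, ⊗, w!p}. -/
inductive ProvMELLLin : Sequent → Prop
  | axj (a n : ℕ) :
      ProvMELLLin (Formula.atom a ::ₘ Formula.natom a ::ₘ Multiset.replicate n Formula.hole)
  | onej (n : ℕ) : ProvMELLLin (Formula.one ::ₘ Multiset.replicate n Formula.hole)
  | parr (Γ : Sequent) (A B : Formula) :
      ProvMELLLin (A ::ₘ B ::ₘ Γ) → ProvMELLLin (Formula.parr A B ::ₘ Γ)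
  | tens (Γ Δ : Sequent) (A B : Formula) :
      ProvMELLLin (A ::ₘ Γ) → ProvMELLLin (B ::ₘ Δ) →
      ProvMELLLin (Formula.tens A B ::ₘ (Γ + Δ))
  | wprom (Γ : Sequent) (A : Formula) :
      ProvMELLLin (A ::ₘ Γ) → ProvMELLLin (Formula.bang A ::ₘ Γ.map Formula.quest)

/-- MELL with the cut rule, recording the list of active cut formulas of the derivation. -/
inductive ProvMELLCutL : Sequent → List Formula → Prop
  | ax (a : ℕ) : ProvMELLCutL {Formula.atom a, Formula.natom a} []
  | parr (Γ : Sequent) (A B : Formula) (L : List Formula) :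
      ProvMELLCutL (A ::ₘ B ::ₘ Γ) L → ProvMELLCutL (Formula.parr A B ::ₘ Γ) L
  | tens (Γ Δ : Sequent) (A B : Formula) (L₁ L₂ : List Formula) :
      ProvMELLCutL (A ::ₘ Γ) L₁ → ProvMELLCutL (B ::ₘ Δ) L₂ →
      ProvMELLCutL (Formula.tens A B ::ₘ (Γ + Δ)) (L₁ ++ L₂)
  | bot (Γ : Sequent) (L : List Formula) :
      ProvMELLCutL Γ L → ProvMELLCutL (Formula.bot ::ₘ Γ) L
  | one : ProvMELLCutL {Formula.one} []
  | prom (Γ : Sequent) (A : Formula) (L : List Formula) :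
      ProvMELLCutL (A ::ₘ Γ.map Formula.quest) L →
      ProvMELLCutL (Formula.bang A ::ₘ Γ.map Formula.quest) L
  | der (Γ : Sequent) (A : Formula) (L : List Formula) :
      ProvMELLCutL (A ::ₘ Γ) L → ProvMELLCutL (Formula.quest A ::ₘ Γ) L
  | weak (Γ : Sequent) (A : Formula) (L : List Formula) :
      ProvMELLCutL Γ L → ProvMELLCutL (Formula.quest A ::ₘ Γ) L
  | contr (Γ : Sequent) (A : Formula) (L : List Formula) :
      ProvMELLCutL (Formula.quest A ::ₘ Formula.quest A ::ₘ Γ) L →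
      ProvMELLCutL (Formula.quest A ::ₘ Γ) L
  | cut (Γ Δ : Sequent) (A : Formula) (L₁ L₂ : List Formula) :
      A.isMELL → ProvMELLCutL (A ::ₘ Γ) L₁ → ProvMELLCutL (A.dual ::ₘ Δ) L₂ →
      ProvMELLCutL (Γ + Δ) (A :: (L₁ ++ L₂))

/-! ## Deep inference rewriting -/

/-- Closure of a rewrite relation under arbitrary formula contexts. -/
inductive Deep (r : Formula → Formula → Prop) : Formula → Formula → Prop
  | base {A B : Formula} : r A B → Deep r A B
  | parrL {A A' : Formula} (B : Formula) :
      Deep r A A' → Deep r (Formula.parr A B) (Formula.parr A' B)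
  | parrR (A : Formula) {B B' : Formula} :
      Deep r B B' → Deep r (Formula.parr A B) (Formula.parr A B')
  | tensL {A A' : Formula} (B : Formula) :
      Deep r A A' → Deep r (Formula.tens A B) (Formula.tens A' B)
  | tensR (A : Formula) {B B' : Formula} :
      Deep r B B' → Deep r (Formula.tens A B) (Formula.tens A B')
  | bang {A A' : Formula} : Deep r A A' → Deep r (Formula.bang A) (Formula.bang A')
  | quest {A A' : Formula} : Deep r A A' → Deep r (Formula.quest A) (Formula.quest A')

/-- Base steps of all the deep-MELL rules:
deep dereliction, deep digging, deep ∘-digging, deep ⊥, deep weakening, deep contraction. -/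
inductive DeepMELLBase : Formula → Formula → Prop
  | der (A : Formula) : DeepMELLBase A (Formula.quest A)
  | dig (A : Formula) :
      DeepMELLBase (Formula.quest (Formula.quest A)) (Formula.quest A)
  | digHole : DeepMELLBase (Formula.quest Formula.hole) Formula.hole
  | bot : DeepMELLBase Formula.hole Formula.bot
  | weak (A : Formula) : DeepMELLBase Formula.hole (Formula.quest A)
  | contr (A : Formula) :
      DeepMELLBase (Formula.parr (Formula.quest A) (Formula.quest A)) (Formula.quest A)

/-- Base steps of deep dereliction, deep digging and deep ∘-digging. -/
inductive DigBase : Formula → Formula → Prop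
  | der (A : Formula) : DigBase A (Formula.quest A)
  | dig (A : Formula) : DigBase (Formula.quest (Formula.quest A)) (Formula.quest A)
  | digHole : DigBase (Formula.quest Formula.hole) Formula.hole

/-- Base steps of deep weakening and deep ⊥. -/
inductive WeakBase : Formula → Formula → Prop
  | bot : WeakBase Formula.hole Formula.bot
  | weak (A : Formula) : WeakBase Formula.hole (Formula.quest A)

/-- Base step of deep contraction. -/
inductive ContrBase : Formula → Formula → Prop
  | contr (A : Formula) :
      ContrBase (Formula.parr (Formula.quest A) (Formula.quest A)) (Formula.quest A)

/-- Base steps of deep ⊥, deep weakening, deep ?-contraction, deep ∘-contraction,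
and the deep associativity-commutativity rules. -/
inductive WCACBase : Formula → Formula → Prop
  | bot : WCACBase Formula.hole Formula.bot
  | weak (A : Formula) : WCACBase Formula.hole (Formula.quest A)
  | contr (A : Formula) :
      WCACBase (Formula.parr (Formula.quest A) (Formula.quest A)) (Formula.quest A)
  | contrHole :
      WCACBase (Formula.parr Formula.hole Formula.hole) Formula.hole
  | tensAssoc (A B C : Formula) :
      WCACBase (Formula.tens (Formula.tens A B) C) (Formula.tens A (Formula.tens B C))
  | parrAssoc (A B C : Formula) :
      WCACBase (Formula.parr (Formula.parr A B) C) (Formula.parr A (Formula.parr B C))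
  | tensComm (A B : Formula) : WCACBase (Formula.tens A B) (Formula.tens B A)
  | parrComm (A B : Formula) : WCACBase (Formula.parr A B) (Formula.parr B A)

/-- One deep rewriting step inside a sequent: rewrite one member of the multiset. -/
def SeqStep (r : Formula → Formula → Prop) (Γ Γ' : Sequent) : Prop :=
  ∃ (A A' : Formula) (Δ : Sequent), Deep r A A' ∧ Γ = A ::ₘ Δ ∧ Γ' = A' ::ₘ Δ

/-- Derivability between sequents by a finite sequence of deep rewriting steps. -/
def SeqDeriv (r : Formula → Formula → Prop) : Sequent → Sequent → Prop :=
  Relation.ReflTransGen (SeqStep r)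

/-- Derivability between formulas by a finite sequence of deep rewriting steps. -/
def FormDeriv (r : Formula → Formula → Prop) : Formula → Formula → Prop :=
  Relation.ReflTransGen (Deep r)

/-- Equivalence of formulas modulo associativity and commutativity of ⊗ and ⅋. -/
inductive ACEq : Formula → Formula → Prop
  | refl (A : Formula) : ACEq A A
  | symm {A B : Formula} : ACEq A B → ACEq B A
  | trans {A B C : Formula} : ACEq A B → ACEq B C → ACEq A C
  | tensAssoc (A B C : Formula) :
      ACEq (Formula.tens (Formula.tens A B) C) (Formula.tens A (Formula.tens B C))
  | parrAssoc (A B C : Formula) :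
      ACEq (Formula.parr (Formula.parr A B) C) (Formula.parr A (Formula.parr B C))
  | tensComm (A B : Formula) : ACEq (Formula.tens A B) (Formula.tens B A)
  | parrComm (A B : Formula) : ACEq (Formula.parr A B) (Formula.parr B A)
  | tensCongr {A A' B B' : Formula} :
      ACEq A A' → ACEq B B' → ACEq (Formula.tens A B) (Formula.tens A' B')
  | parrCongr {A A' B B' : Formula} :
      ACEq A A' → ACEq B B' → ACEq (Formula.parr A B) (Formula.parr A' B')
  | bangCongr {A A' : Formula} : ACEq A A' → ACEq (Formula.bang A) (Formula.bang A')
  | questCongr {A A' : Formula} : ACEq A A' → ACEq (Formula.quest A) (Formula.quest A')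

/-! ## Mixed graphs and relation webs -/

/-- A mixed graph: a finite set of vertices from `ℕ`, an undirected edge relation `R`
and a directed edge relation `lt`. -/
structure MGraph where
  verts : Finset ℕ
  R : ℕ → ℕ → Prop
  lt : ℕ → ℕ → Prop

namespace MGraph

/-- The axioms of mixed graphs: `R` symmetric and irreflexive, `lt` irreflexive,
`R ∩ lt = ∅`, and all edges between vertices. -/
def IsMixed (G : MGraph) : Prop :=
  (∀ u v, G.R u v → G.R v u) ∧
  (∀ v, ¬ G.R v v) ∧
  (∀ v, ¬ G.lt v v) ∧
  (∀ u v, ¬ (G.R u v ∧ G.lt u v)) ∧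
  (∀ u v, G.R u v → u ∈ G.verts ∧ v ∈ G.verts) ∧
  (∀ u v, G.lt u v → u ∈ G.verts ∧ v ∈ G.verts)

/-- `u` and `v` are joined by no edge at all. -/
def noEdge (G : MGraph) (u v : ℕ) : Prop :=
  ¬ G.R u v ∧ ¬ G.R v u ∧ ¬ G.lt u v ∧ ¬ G.lt v u

/-- A relation web: a non-empty mixed graph with `lt` transitive, `(V,R)` a cograph
(no induced P₄), `(V,lt)` a series-parallel order (no induced N), and no induced
3-color triangle. -/
def IsRelWeb (G : MGraph) : Prop :=
  G.IsMixed ∧ G.verts.Nonempty ∧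
  (∀ u v w, G.lt u v → G.lt v w → G.lt u w) ∧
  (¬ ∃ w x y z, w ∈ G.verts ∧ x ∈ G.verts ∧ y ∈ G.verts ∧ z ∈ G.verts ∧
      w ≠ x ∧ w ≠ y ∧ w ≠ z ∧ x ≠ y ∧ x ≠ z ∧ y ≠ z ∧
      G.R w x ∧ G.R x y ∧ G.R y z ∧ ¬ G.R w y ∧ ¬ G.R w z ∧ ¬ G.R x z) ∧
  (¬ ∃ u v y z, u ∈ G.verts ∧ v ∈ G.verts ∧ y ∈ G.verts ∧ z ∈ G.verts ∧
      u ≠ v ∧ u ≠ y ∧ u ≠ z ∧ v ≠ y ∧ v ≠ z ∧ y ≠ z ∧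
      G.lt u v ∧ G.lt y v ∧ G.lt y z ∧
      ¬ G.lt u y ∧ ¬ G.lt y u ∧ ¬ G.lt u z ∧ ¬ G.lt z u ∧ ¬ G.lt v z ∧ ¬ G.lt z v) ∧
  (¬ ∃ u w v, u ∈ G.verts ∧ w ∈ G.verts ∧ v ∈ G.verts ∧
      u ≠ w ∧ u ≠ v ∧ w ≠ v ∧
      G.noEdge u w ∧ G.R w v ∧ (G.lt u v ∨ G.lt v u))

/-- `G ⅋ H`: disjoint union. -/
def uparr (G H : MGraph) : MGraph where
  verts := G.verts ∪ H.verts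
  R := fun u v => G.R u v ∨ H.R u v
  lt := fun u v => G.lt u v ∨ H.lt u v

/-- `G ⊗ H`: disjoint union plus all undirected edges between `G` and `H`. -/
def utens (G H : MGraph) : MGraph where
  verts := G.verts ∪ H.verts
  R := fun u v => G.R u v ∨ H.R u v ∨
    (u ∈ G.verts ∧ v ∈ H.verts) ∨ (u ∈ H.verts ∧ v ∈ G.verts)
  lt := fun u v => G.lt u v ∨ H.lt u v

/-- `G ◁ H`: disjoint union plus all directed edges from `G` to `H`. -/
def useq (G H : MGraph) : MGraph where
  verts := G.verts ∪ H.verts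
  R := fun u v => G.R u v ∨ H.R u v
  lt := fun u v => G.lt u v ∨ H.lt u v ∨ (u ∈ G.verts ∧ v ∈ H.verts)

/-- Graphs constructible from single vertices using `⅋`, `◁` and `⊗`
(applied to disjoint graphs). -/
inductive Constructible : MGraph → Prop
  | single (n : ℕ) :
      Constructible ⟨{n}, fun _ _ => False, fun _ _ => False⟩
  | parr {G H : MGraph} : Constructible G → Constructible H →
      Disjoint G.verts H.verts → Constructible (uparr G H)
  | tens {G H : MGraph} : Constructible G → Constructible H →
      Disjoint G.verts H.verts → Constructible (utens G H)
  | seq {G H : MGraph} : Constructible G → Constructible H →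
      Disjoint G.verts H.verts → Constructible (useq G H)

end MGraph

/-! ## Labeled graphs and the translation of formulas -/

/-- Vertex labels: atoms, dual atoms, `!`, `?`, `1`, `⊥`, `∘`. -/
inductive GLabel where
  | atom  : ℕ → GLabel
  | natom : ℕ → GLabel
  | bang  : GLabel
  | quest : GLabel
  | one   : GLabel
  | bot   : GLabel
  | hole  : GLabel
  deriving DecidableEq

/-- Atomic labels (atoms or dual atoms). -/
def GLabel.isAtom : GLabel → Prop
  | .atom _  => True
  | .natom _ => True
  | _        => False

/-- A labeled mixed graph. -/
structure LabGraph extends MGraph where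
  lab : ℕ → GLabel

namespace LabGraph

/-- A labeled graph is a relation web when its underlying mixed graph is. -/
def IsWeb (G : LabGraph) : Prop := G.toMGraph.IsRelWeb

/-- Properly labeled: a vertex has an outgoing `lt`-edge iff its label is `!` or `?`. -/
def ProperlyLabeled (G : LabGraph) : Prop :=
  ∀ v ∈ G.verts, (∃ w, G.lt v w) ↔ (G.lab v = GLabel.bang ∨ G.lab v = GLabel.quest)

/-- Modal: properly labeled, and vertices with `lt`-edges to a common target are
`lt`-comparable. -/
def IsModalLab (G : LabGraph) : Prop :=
  G.ProperlyLabeled ∧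
  ∀ u v w, u ∈ G.verts → v ∈ G.verts → w ∈ G.verts →
    G.lt u w → G.lt v w → u ≠ v → (G.lt u v ∨ G.lt v u)

/-- A (labeled) modal relation web. -/
def IsModalWeb (G : LabGraph) : Prop := G.IsWeb ∧ G.IsModalLab

/-- The single-vertex labeled graph. -/
def point (l : GLabel) : LabGraph where
  verts := {0}
  R := fun _ _ => False
  lt := fun _ _ => False
  lab := fun _ => l

/-- `G ⅋ H` on labeled graphs, with vertices renamed evenly/oddly so as to be disjoint. -/
def gparr (G H : LabGraph) : LabGraph where
  verts := G.verts.image (fun n => 2 * n) ∪ H.verts.image (fun n => 2 * n + 1)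
  R := fun u v =>
    (u % 2 = 0 ∧ v % 2 = 0 ∧ G.R (u / 2) (v / 2)) ∨
    (u % 2 = 1 ∧ v % 2 = 1 ∧ H.R (u / 2) (v / 2))
  lt := fun u v =>
    (u % 2 = 0 ∧ v % 2 = 0 ∧ G.lt (u / 2) (v / 2)) ∨
    (u % 2 = 1 ∧ v % 2 = 1 ∧ H.lt (u / 2) (v / 2))
  lab := fun n => if n % 2 = 0 then G.lab (n / 2) else H.lab (n / 2)

/-- `G ⊗ H` on labeled graphs. -/
def gtens (G H : LabGraph) : LabGraph where
  verts := (gparr G H).verts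
  R := fun u v => (gparr G H).R u v ∨
    (u % 2 = 0 ∧ v % 2 = 1 ∧ u / 2 ∈ G.verts ∧ v / 2 ∈ H.verts) ∨
    (u % 2 = 1 ∧ v % 2 = 0 ∧ u / 2 ∈ H.verts ∧ v / 2 ∈ G.verts)
  lt := (gparr G H).lt
  lab := (gparr G H).lab

/-- `G ◁ H` on labeled graphs. -/
def gseq (G H : LabGraph) : LabGraph where
  verts := (gparr G H).verts
  R := (gparr G H).R
  lt := fun u v => (gparr G H).lt u v ∨
    (u % 2 = 0 ∧ v % 2 = 1 ∧ u / 2 ∈ G.verts ∧ v / 2 ∈ H.verts)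
  lab := (gparr G H).lab

/-- The translation `⟦·⟧` of formulas into labeled graphs. -/
def trans : Formula → LabGraph
  | .atom a  => point (.atom a)
  | .natom a => point (.natom a)
  | .one     => point .one
  | .bot     => point .bot
  | .hole    => point .hole
  | .parr A B => gparr (trans A) (trans B)
  | .tens A B => gtens (trans A) (trans B)
  | .bang A  => gseq (point .bang) (trans A)
  | .quest A => gseq (point .quest) (trans A)

/-- The translation of a sequent (represented as a non-empty list): `⅋` of the members. -/
def transSeq : List Formula → LabGraph
  | [] => point .hole
  | [A] => trans A
  | A :: B :: Γ => gparr (trans A) (transSeq (B :: Γ))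

/-- Isomorphism of labeled mixed graphs. -/
def Iso (G H : LabGraph) : Prop :=
  ∃ f : ℕ → ℕ, Set.BijOn f ↑G.verts ↑H.verts ∧
    (∀ u ∈ G.verts, ∀ v ∈ G.verts,
      (G.R u v ↔ H.R (f u) (f v)) ∧ (G.lt u v ↔ H.lt (f u) (f v))) ∧
    (∀ v ∈ G.verts, H.lab (f v) = G.lab v)

end LabGraph

/-! ## RGB-cographs -/

/-- An RGB-cograph: a labeled graph together with a linking relation. -/
structure RGB extends LabGraph where
  link : ℕ → ℕ → Prop

namespace RGB

/-- The conditions for being an RGB-cograph. -/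
def IsRGB (G : RGB) : Prop :=
  G.toLabGraph.IsModalWeb ∧
  (∀ v ∈ G.verts, G.link v v) ∧
  (∀ u v, G.link u v → G.link v u) ∧
  (∀ u v w, G.link u v → G.link v w → G.link u w) ∧
  (∀ u v, G.link u v → u ∈ G.verts ∧ v ∈ G.verts) ∧
  (∀ v ∈ G.verts, (G.lab v).isAtom →
      ∃! w, w ≠ v ∧ G.link v w ∧ (G.lab w).isAtom) ∧
  (∀ v ∈ G.verts, G.lab v = GLabel.one →
      ∀ w, G.link v w → w ≠ v → G.lab w = GLabel.hole) ∧
  (∀ v ∈ G.verts, G.lab v = GLabel.hole →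
      ∃ w, G.link v w ∧ ((G.lab w).isAtom ∨ G.lab w = GLabel.one)) ∧
  (∀ v ∈ G.verts, (G.lab v = GLabel.bang ∨ G.lab v = GLabel.quest) →
      (∃! w, G.link v w ∧ G.lab w = GLabel.bang) ∧
      (∀ w, G.link v w → G.lab w ≠ GLabel.hole))

/-- Adjacency by an `R`- or `lt`-edge (in either direction). -/
def rlAdj (G : RGB) (u v : ℕ) : Prop :=
  G.R u v ∨ G.R v u ∨ G.lt u v ∨ G.lt v u

/-- Adjacency by a linking edge. -/
def lkAdj (G : RGB) (u v : ℕ) : Prop := G.link u v ∧ u ≠ v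

/-- A single step of an alternating path; `true` = linking edge, `false` = R/lt edge. -/
def aeStep (G : RGB) : Bool → ℕ → ℕ → Prop
  | true,  u, v => G.lkAdj u v
  | false, u, v => G.rlAdj u v

/-- The edges of the list alternate, starting with an edge of kind `b`. -/
def AltChain (G : RGB) : Bool → List ℕ → Prop
  | _, [] => True
  | _, [_] => True
  | b, u :: v :: l => G.aeStep b u v ∧ AltChain G (!b) (v :: l)

/-- An æ-path: a non-empty elementary alternating path on vertices of `G`. -/
def IsAEPath (G : RGB) (l : List ℕ) : Prop :=
  l ≠ [] ∧ l.Nodup ∧ (∀ v ∈ l, v ∈ G.verts) ∧ ∃ b, G.AltChain b l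

/-- A path is chordless if no `R`/`lt` edge joins two non-consecutive vertices. -/
def Chordless (G : RGB) (l : List ℕ) : Prop :=
  ∀ (i j : ℕ) (hi : i < l.length) (hj : j < l.length), i + 2 ≤ j →
    ¬ G.rlAdj (l.get ⟨i, hi⟩) (l.get ⟨j, hj⟩)

/-- æ-connectedness: any two vertices are joined by a chordless æ-path. -/
def AEConnected (G : RGB) : Prop :=
  ∀ u ∈ G.verts, ∀ v ∈ G.verts,
    ∃ l, G.IsAEPath l ∧ G.Chordless l ∧ l.head? = some u ∧ l.getLast? = some v

/-- An æ-cycle, represented by the list of its (distinct) vertices; the closing edge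
returns to the first vertex and the number of edges is even so that alternation closes. -/
def IsAECycle (G : RGB) (l : List ℕ) : Prop :=
  2 ≤ l.length ∧ l.length % 2 = 0 ∧ l.Nodup ∧ (∀ v ∈ l, v ∈ G.verts) ∧
  ∃ b, G.AltChain b (l ++ [l.headI])

/-- Chordlessness for cycles: no `R`/`lt` edge between cyclically non-consecutive
vertices. -/
def ChordlessCyc (G : RGB) (l : List ℕ) : Prop :=
  ∀ (i j : ℕ) (hi : i < l.length) (hj : j < l.length), i + 2 ≤ j →
    ¬ (i = 0 ∧ j = l.length - 1) →
    ¬ G.rlAdj (l.get ⟨i, hi⟩) (l.get ⟨j, hj⟩)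

/-- æ-acyclicity: no chordless æ-cycle. -/
def AEAcyclic (G : RGB) : Prop :=
  ¬ ∃ l, G.IsAECycle l ∧ G.ChordlessCyc l

/-- MELL-correctness of an RGB-cograph. -/
def MELLCorrect (G : RGB) : Prop :=
  G.verts.Nonempty ∧ G.AEConnected ∧ G.AEAcyclic ∧
  (∀ w v v', G.lt w v → G.link v v' → ∃ w', G.link w' w ∧ G.lt w' v')

/-- MLL-correctness: MELL-correct and every vertex is atomic. -/
def MLLCorrect (G : RGB) : Prop :=
  G.MELLCorrect ∧ ∀ v ∈ G.verts, (G.lab v).isAtom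

/-- MLLu-correctness: MELL-correct and every vertex is atomic, `1` or `∘`. -/
def MLLuCorrect (G : RGB) : Prop :=
  G.MELLCorrect ∧
  ∀ v ∈ G.verts, (G.lab v).isAtom ∨ G.lab v = GLabel.one ∨ G.lab v = GLabel.hole

end RGB

/-! ## Fibrations -/

/-- No edge at all between `u` and `v` in the labeled graph `H`. -/
def LabGraph.noE (H : LabGraph) (u v : ℕ) : Prop := H.toMGraph.noEdge u v

/-- A linear fibration between labeled modal relation webs. -/
def IsLinearFib (G H : LabGraph) (f : ℕ → ℕ) : Prop :=
  (∀ v ∈ G.verts, f v ∈ H.verts) ∧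
  -- (1) preservation of R and lt
  (∀ u v, u ∈ G.verts → v ∈ G.verts →
    (G.R u v → H.R (f u) (f v)) ∧ (G.lt u v → H.lt (f u) (f v))) ∧
  -- (2) skew lifting
  (∀ v ∈ G.verts, ∀ w ∈ H.verts,
    (H.R w (f v) → ∃ u ∈ G.verts, G.R u v ∧ H.noE w (f u)) ∧
    (H.lt w (f v) → ∃ u ∈ G.verts, G.lt u v ∧ H.noE w (f u))) ∧
  -- (3) modality
  (∀ u v, u ∈ G.verts → v ∈ G.verts → u ≠ v → G.noE u v → H.lt (f u) (f v) →
    ∃ w ∈ G.verts, (G.lt w v ∧ f w = f u) ∨ (G.lt u w ∧ f w = f v)) ∧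
  -- (4) labels
  (∀ v ∈ G.verts,
    (G.lab v ≠ GLabel.hole → H.lab (f v) = G.lab v) ∧
    (G.lab v = GLabel.hole →
      H.lab (f v) = GLabel.hole ∨ H.lab (f v) = GLabel.bot ∨ H.lab (f v) = GLabel.quest)) ∧
  -- (5) ∘-domination
  (∀ w ∈ H.verts, (∀ v ∈ G.verts, f v ≠ w) →
    ∃ u ∈ G.verts, G.lab u = GLabel.hole ∧ H.lab (f u) = GLabel.quest ∧ H.lt (f u) w ∧
      ∀ v ∈ G.verts, (H.R (f v) (f u) ↔ H.R (f v) w) ∧ (H.lt (f v) (f u) ↔ H.lt (f v) w)) ∧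
  -- (6) ?-domination
  (∀ v₁ v₂, v₁ ∈ G.verts → v₂ ∈ G.verts → v₁ ≠ v₂ → f v₁ = f v₂ →
    ∃ w₁ w₂, w₁ ∈ G.verts ∧ w₂ ∈ G.verts ∧ w₁ ≠ w₂ ∧ f w₁ = f w₂ ∧
      H.lab (f w₁) = GLabel.quest ∧
      ((w₁ = v₁ ∧ w₂ = v₂) ∨ (G.lt w₁ v₁ ∧ G.lt w₂ v₂)))

/-- `v` and `w` are clones: every other vertex relates to them in the same way. -/
def Clones (G : LabGraph) (v w : ℕ) : Prop :=
  ∀ u ∈ G.verts, u ≠ v → u ≠ w →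
    (G.R u v ↔ G.R u w) ∧ (G.lt u v ↔ G.lt u w) ∧ (G.lt v u ↔ G.lt w u) ∧
    (G.noE u v ↔ G.noE u w)

/-- A ?-map between labeled modal relation webs. -/
def IsQMap (G H : LabGraph) (f : ℕ → ℕ) : Prop :=
  (∀ v ∈ G.verts, f v ∈ H.verts) ∧
  (∀ v w, v ∈ G.verts → w ∈ G.verts → v ≠ w → f v = f w →
    Clones G v w ∧ G.lt v w ∧ H.lab (f v) = G.lab w ∧
    (G.lab w = GLabel.quest ∨ G.lab w = GLabel.hole)) ∧
  (∀ v w, v ∈ G.verts → w ∈ G.verts → f v ≠ f w →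
    (G.R v w → H.R (f v) (f w)) ∧ (G.lt v w → H.lt (f v) (f w)) ∧
    (G.lt w v → H.lt (f w) (f v)) ∧ (G.noE v w → H.noE (f v) (f w))) ∧
  (∀ w ∈ H.verts, (∀ v ∈ G.verts, f v ≠ w) →
    H.lab w = GLabel.quest ∧ ∃ x, H.lt w x)

/-- A MELL-fibration: the composite of a ?-map followed by a linear fibration. -/
def IsMELLFib (G H : LabGraph) (f : ℕ → ℕ) : Prop :=
  ∃ (K : LabGraph) (g h : ℕ → ℕ),
    K.IsModalWeb ∧ IsQMap G K g ∧ IsLinearFib K H h ∧ ∀ v ∈ G.verts, f v = h (g v)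

/-- A MLLu-fibration: a MELL-fibration whose codomain has no `!` or `?` vertex. -/
def IsMLLuFib (G H : LabGraph) (f : ℕ → ℕ) : Prop :=
  IsMELLFib G H f ∧
  ∀ v ∈ H.verts, H.lab v ≠ GLabel.bang ∧ H.lab v ≠ GLabel.quest

/-- A MLL-fibration: a bijection whose codomain has no `!`, `?` or `∘` vertex. -/
def IsMLLFib (G H : LabGraph) (f : ℕ → ℕ) : Prop :=
  Set.BijOn f ↑G.verts ↑H.verts ∧
  ∀ v ∈ H.verts,
    H.lab v ≠ GLabel.bang ∧ H.lab v ≠ GLabel.quest ∧ H.lab v ≠ GLabel.hole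

/-- An allegiant map from an RGB-cograph to a labeled relation web. -/
def Allegiant (G : RGB) (H : LabGraph) (f : ℕ → ℕ) : Prop :=
  (∀ v w, v ∈ G.verts → w ∈ G.verts → G.link v w → v ≠ w →
    (G.lab v).isAtom → (G.lab w).isAtom →
    ∃ n : ℕ, (H.lab (f v) = GLabel.atom n ∧ H.lab (f w) = GLabel.natom n) ∨
             (H.lab (f v) = GLabel.natom n ∧ H.lab (f w) = GLabel.atom n)) ∧
  (∀ v ∈ G.verts, G.lab v ≠ GLabel.hole → H.lab (f v) = G.lab v) ∧
  (∀ v ∈ G.verts, G.lab v = GLabel.hole →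
    H.lab (f v) = GLabel.bot ∨ H.lab (f v) = GLabel.quest)

/-! ## Systems, correctness and combinatorial proofs, parametrized by X -/

inductive Sys where
  | MLL | MLLu | MELL

/-- Provability in the sequent system `X`. -/
def SysProv : Sys → Sequent → Prop
  | Sys.MLL  => ProvMLL
  | Sys.MLLu => ProvMLLu
  | Sys.MELL => ProvMELL

/-- Provability in the linear system `X^ℓ`. -/
def SysProvLin : Sys → Sequent → Prop
  | Sys.MLL  => ProvMLL
  | Sys.MLLu => ProvMLLuLin
  | Sys.MELL => ProvMELLLin

/-- The appropriate class of formulas for `X`: MELL-formulas for MELL; formulas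
without modalities for MLLu; formulas without modalities and without `∘` for MLL. -/
def SysForm : Sys → Formula → Prop
  | Sys.MLL  => fun F => F.noMod ∧ F.isMELL
  | Sys.MLLu => Formula.noMod
  | Sys.MELL => Formula.isMELL

/-- `X`-correctness of RGB-cographs. -/
def SysCorrect : Sys → RGB → Prop
  | Sys.MLL  => RGB.MLLCorrect
  | Sys.MLLu => RGB.MLLuCorrect
  | Sys.MELL => RGB.MELLCorrect

/-- `X`-fibrations. -/
def SysFib : Sys → LabGraph → LabGraph → (ℕ → ℕ) → Prop
  | Sys.MLL  => IsMLLFib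
  | Sys.MLLu => IsMLLuFib
  | Sys.MELL => IsMELLFib

/-- An `X`-combinatorial proof with conclusion graph `H`: an allegiant `X`-fibration
from an `X`-correct RGB-cograph. -/
def IsCombProof (X : Sys) (G : RGB) (f : ℕ → ℕ) (H : LabGraph) : Prop :=
  G.IsRGB ∧ SysCorrect X G ∧ Allegiant G H f ∧ SysFib X G.toLabGraph H f


/-! ### Auxiliary development for Statement 6 -/

section Aux

open Classical

/-- Reachability inside a finite vertex set along an edge relation. -/
def Reach (s : Finset ℕ) (e : ℕ → ℕ → Prop) : ℕ → ℕ → Prop :=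
  Relation.ReflTransGen (fun a b => a ∈ s ∧ b ∈ s ∧ e a b)

/-- Connectivity of the graph `(s, e)`. -/
def Conn (s : Finset ℕ) (e : ℕ → ℕ → Prop) : Prop :=
  ∀ u ∈ s, ∀ v ∈ s, Reach s e u v

theorem Reach.trans' {s e} {a b c : ℕ} (h1 : Reach s e a b) (h2 : Reach s e b c) :
    Reach s e a c := Relation.ReflTransGen.trans h1 h2

theorem reach_symm {s : Finset ℕ} {e : ℕ → ℕ → Prop}
    (he : ∀ a b, e a b → e b a) {u v : ℕ} (h : Reach s e u v) : Reach s e v u := by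
  induction h with
  | refl => exact Relation.ReflTransGen.refl
  | tail _ hstep ih =>
      exact Relation.ReflTransGen.head ⟨hstep.2.1, hstep.1, he _ _ hstep.2.2⟩ ih

theorem reach_mono {s : Finset ℕ} {e e' : ℕ → ℕ → Prop}
    (h : ∀ a b, a ∈ s → b ∈ s → e a b → e' a b) {u v : ℕ} (hr : Reach s e u v) :
    Reach s e' u v := by
  induction hr with
  | refl => exact Relation.ReflTransGen.refl
  | tail _ hstep ih => exact ih.tail ⟨hstep.1, hstep.2.1, h _ _ hstep.1 hstep.2.1 hstep.2.2⟩

theorem reach_subset {s s' : Finset ℕ} (hss : s' ⊆ s) {e : ℕ → ℕ → Prop} {u v : ℕ}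
    (hr : Reach s' e u v) : Reach s e u v := by
  induction hr with
  | refl => exact Relation.ReflTransGen.refl
  | tail _ hstep ih => exact ih.tail ⟨hss hstep.1, hss hstep.2.1, hstep.2.2⟩

theorem reach_mem {s : Finset ℕ} {e : ℕ → ℕ → Prop} {u v : ℕ}
    (hr : Reach s e u v) (hu : u ∈ s) : v ∈ s := by
  induction hr with
  | refl => exact hu
  | tail _ hstep _ => exact hstep.2.1

/-- If `z` has no edges at all in `(s,e)`, any vertex reachable from `z` is `z`. -/
theorem reach_isolated {s : Finset ℕ} {e : ℕ → ℕ → Prop} {z v : ℕ}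
    (hiso : ∀ w ∈ s, ¬ e z w) (hr : Reach s e z v) : v = z := by
  rcases hr.cases_head with h | ⟨c, hzc, _⟩
  · exact h.symm
  · exact absurd hzc.2.2 (hiso _ hzc.2.1)

/-- A path from `x` to `y` avoiding-or-hitting `z`: either it stays in `s.erase z`,
or some vertex reachable from `x` in `s.erase z` has an edge to `z`. -/
theorem reach_through {s : Finset ℕ} {e : ℕ → ℕ → Prop} {z x y : ℕ}
    (hr : Reach s e x y) (hx : x ≠ z) (hy : y ≠ z) :
    Reach (s.erase z) e x y ∨ ∃ a, a ≠ z ∧ Reach (s.erase z) e x a ∧ e a z := by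
  induction hr using Relation.ReflTransGen.head_induction_on with
  | refl => exact Or.inl Relation.ReflTransGen.refl
  | head hstep htail ih =>
      rename_i a c
      by_cases hcz : c = z
      · exact Or.inr ⟨a, hx, Relation.ReflTransGen.refl, hcz ▸ hstep.2.2⟩
      · rcases ih hcz with h | ⟨b, hbz, hrb, hbe⟩
        · exact Or.inl (Relation.ReflTransGen.head
            ⟨Finset.mem_erase.2 ⟨hx, hstep.1⟩, Finset.mem_erase.2 ⟨hcz, hstep.2.1⟩,
              hstep.2.2⟩ h)
        · exact Or.inr ⟨b, hbz, Relation.ReflTransGen.head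
            ⟨Finset.mem_erase.2 ⟨hx, hstep.1⟩, Finset.mem_erase.2 ⟨hcz, hstep.2.1⟩,
              hstep.2.2⟩ hrb, hbe⟩

/-- On a path from a `¬Q`-vertex to a `Q`-vertex there is an edge switching `Q`. -/
theorem reach_switch {s : Finset ℕ} {e : ℕ → ℕ → Prop} {x y : ℕ} {Q : ℕ → Prop}
    (hr : Reach s e x y) (hx : ¬ Q x) (hy : Q y) :
    ∃ a b, a ∈ s ∧ b ∈ s ∧ e a b ∧ ¬ Q a ∧ Q b ∧ Reach s e x a := by
  induction hr using Relation.ReflTransGen.head_induction_on with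
  | refl => exact absurd hy hx
  | head hstep htail ih =>
      rename_i a c
      by_cases hQc : Q c
      · exact ⟨a, c, hstep.1, hstep.2.1, hstep.2.2, hx, hQc, Relation.ReflTransGen.refl⟩
      · obtain ⟨a', b', h1, h2, h3, h4, h5, h6⟩ := ih hQc
        exact ⟨a', b', h1, h2, h3, h4, h5,
          Relation.ReflTransGen.head ⟨hstep.1, hstep.2.1, hstep.2.2⟩ h6⟩

namespace MGraph

/-- Undirected adjacency by any edge. -/
def adjE (G : MGraph) (u v : ℕ) : Prop := G.R u v ∨ G.R v u ∨ G.lt u v ∨ G.lt v u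

/-- "Non-R" adjacency. -/
def corE (G : MGraph) (u v : ℕ) : Prop := u ≠ v ∧ ¬ G.R u v ∧ ¬ G.R v u

/-- Incomparability adjacency. -/
def incE (G : MGraph) (u v : ℕ) : Prop := u ≠ v ∧ ¬ G.lt u v ∧ ¬ G.lt v u

theorem adjE_symm (G : MGraph) (u v : ℕ) (h : G.adjE u v) : G.adjE v u := by
  unfold adjE at *; tauto

theorem corE_symm (G : MGraph) (u v : ℕ) (h : G.corE u v) : G.corE v u := by
  unfold corE at *; exact ⟨h.1.symm, h.2.2, h.2.1⟩

theorem incE_symm (G : MGraph) (u v : ℕ) (h : G.incE u v) : G.incE v u := by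
  unfold incE at *; exact ⟨h.1.symm, h.2.2, h.2.1⟩

theorem noEdge_symm (G : MGraph) {u v : ℕ} (h : G.noEdge u v) : G.noEdge v u := by
  unfold noEdge at *; tauto

theorem not_adjE_noEdge (G : MGraph) {u v : ℕ} (h : ¬ G.adjE u v) : G.noEdge u v := by
  unfold adjE at h; unfold noEdge; tauto

section WebFacts

variable {G : MGraph} (hG : G.IsRelWeb)
include hG

theorem web_Rsymm : ∀ u v, G.R u v → G.R v u := hG.1.1
theorem web_Rirrefl : ∀ v, ¬ G.R v v := hG.1.2.1
theorem web_ltirrefl : ∀ v, ¬ G.lt v v := hG.1.2.2.1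
theorem web_disj : ∀ u v, ¬ (G.R u v ∧ G.lt u v) := hG.1.2.2.2.1
theorem web_Rmem : ∀ u v, G.R u v → u ∈ G.verts ∧ v ∈ G.verts := hG.1.2.2.2.2.1
theorem web_ltmem : ∀ u v, G.lt u v → u ∈ G.verts ∧ v ∈ G.verts := hG.1.2.2.2.2.2
theorem web_nonempty : G.verts.Nonempty := hG.2.1
theorem web_trans : ∀ u v w, G.lt u v → G.lt v w → G.lt u w := hG.2.2.1

theorem web_noP4 : ¬ ∃ w x y z, w ∈ G.verts ∧ x ∈ G.verts ∧ y ∈ G.verts ∧ z ∈ G.verts ∧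
    w ≠ x ∧ w ≠ y ∧ w ≠ z ∧ x ≠ y ∧ x ≠ z ∧ y ≠ z ∧
    G.R w x ∧ G.R x y ∧ G.R y z ∧ ¬ G.R w y ∧ ¬ G.R w z ∧ ¬ G.R x z := hG.2.2.2.1

theorem web_noN : ¬ ∃ u v y z, u ∈ G.verts ∧ v ∈ G.verts ∧ y ∈ G.verts ∧ z ∈ G.verts ∧
    u ≠ v ∧ u ≠ y ∧ u ≠ z ∧ v ≠ y ∧ v ≠ z ∧ y ≠ z ∧
    G.lt u v ∧ G.lt y v ∧ G.lt y z ∧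
    ¬ G.lt u y ∧ ¬ G.lt y u ∧ ¬ G.lt u z ∧ ¬ G.lt z u ∧ ¬ G.lt v z ∧ ¬ G.lt z v :=
  hG.2.2.2.2.1

theorem web_no3CT : ¬ ∃ u w v, u ∈ G.verts ∧ w ∈ G.verts ∧ v ∈ G.verts ∧
    u ≠ w ∧ u ≠ v ∧ w ≠ v ∧
    G.noEdge u w ∧ G.R w v ∧ (G.lt u v ∨ G.lt v u) := hG.2.2.2.2.2

/-- If `R u v` then no `lt` in either direction and `u ≠ v`. -/
theorem web_R_not_lt {u v : ℕ} (h : G.R u v) :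
    ¬ G.lt u v ∧ ¬ G.lt v u ∧ u ≠ v := by
  refine ⟨fun hl => web_disj hG u v ⟨h, hl⟩,
    fun hl => web_disj hG v u ⟨web_Rsymm hG u v h, hl⟩, ?_⟩
  rintro rfl; exact web_Rirrefl hG u h

/-- If `lt u v` then no `R` in either direction and `u ≠ v`. -/
theorem web_lt_not_R {u v : ℕ} (h : G.lt u v) :
    ¬ G.R u v ∧ ¬ G.R v u ∧ u ≠ v := by
  refine ⟨fun hr => web_disj hG u v ⟨hr, h⟩,
    fun hr => web_disj hG u v ⟨web_Rsymm hG v u hr, h⟩, ?_⟩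
  rintro rfl; exact web_ltirrefl hG u h

theorem adjE_irrefl (v : ℕ) : ¬ G.adjE v v := by
  unfold adjE
  push_neg
  exact ⟨web_Rirrefl hG v, web_Rirrefl hG v, web_ltirrefl hG v, web_ltirrefl hG v⟩

end WebFacts

/-- Induced sub-mixed-graph. -/
def induce (G : MGraph) (s : Finset ℕ) : MGraph where
  verts := s
  R := fun u v => u ∈ s ∧ v ∈ s ∧ G.R u v
  lt := fun u v => u ∈ s ∧ v ∈ s ∧ G.lt u v

theorem induce_isRelWeb {G : MGraph} (hG : G.IsRelWeb) {s : Finset ℕ}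
    (hs : s ⊆ G.verts) (hne : s.Nonempty) : (G.induce s).IsRelWeb := by
  obtain ⟨⟨h1, h2, h3, h4, h5, h6⟩, _, htr, hp4, hn, h3c⟩ := hG
  refine ⟨⟨?_, ?_, ?_, ?_, ?_, ?_⟩, hne, ?_, ?_, ?_, ?_⟩
  · rintro u v ⟨hu, hv, h⟩; exact ⟨hv, hu, h1 u v h⟩
  · rintro v ⟨_, _, h⟩; exact h2 v h
  · rintro v ⟨_, _, h⟩; exact h3 v h
  · rintro u v ⟨⟨_, _, hr⟩, ⟨_, _, hl⟩⟩; exact h4 u v ⟨hr, hl⟩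
  · rintro u v ⟨hu, hv, _⟩; exact ⟨hu, hv⟩
  · rintro u v ⟨hu, hv, _⟩; exact ⟨hu, hv⟩
  · rintro u v w ⟨hu, hv, h⟩ ⟨_, hw, h'⟩; exact ⟨hu, hw, htr u v w h h'⟩
  · rintro ⟨w, x, y, z, hw, hx, hy, hz, d1, d2, d3, d4, d5, d6, e1, e2, e3, n1, n2, n3⟩
    exact hp4 ⟨w, x, y, z, hs hw, hs hx, hs hy, hs hz, d1, d2, d3, d4, d5, d6,
      e1.2.2, e2.2.2, e3.2.2, fun h => n1 ⟨hw, hy, h⟩, fun h => n2 ⟨hw, hz, h⟩,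
      fun h => n3 ⟨hx, hz, h⟩⟩
  · rintro ⟨u, v, y, z, hu, hv, hy, hz, d1, d2, d3, d4, d5, d6,
      e1, e2, e3, n1, n2, n3, n4, n5, n6⟩
    exact hn ⟨u, v, y, z, hs hu, hs hv, hs hy, hs hz, d1, d2, d3, d4, d5, d6,
      e1.2.2, e2.2.2, e3.2.2, fun h => n1 ⟨hu, hy, h⟩, fun h => n2 ⟨hy, hu, h⟩,
      fun h => n3 ⟨hu, hz, h⟩, fun h => n4 ⟨hz, hu, h⟩, fun h => n5 ⟨hv, hz, h⟩,
      fun h => n6 ⟨hz, hv, h⟩⟩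
  · rintro ⟨u, w, v, hu, hw, hv, d1, d2, d3, hne', hr, hlt⟩
    refine h3c ⟨u, w, v, hs hu, hs hw, hs hv, d1, d2, d3, ?_, hr.2.2, ?_⟩
    · exact ⟨fun h => hne'.1 ⟨hu, hw, h⟩, fun h => hne'.2.1 ⟨hw, hu, h⟩,
        fun h => hne'.2.2.1 ⟨hu, hw, h⟩, fun h => hne'.2.2.2 ⟨hw, hu, h⟩⟩
    · rcases hlt with h | h
      · exact Or.inl h.2.2
      · exact Or.inr h.2.2

theorem adjE_cases {G : MGraph} (hG : G.IsRelWeb) {u v : ℕ} (h : G.adjE u v) :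
    G.R u v ∨ G.lt u v ∨ G.lt v u := by
  rcases h with h | h | h | h
  · exact Or.inl h
  · exact Or.inl (web_Rsymm hG _ _ h)
  · exact Or.inr (Or.inl h)
  · exact Or.inr (Or.inr h)

/-- The central case bash: the configuration b–a–z–c with non-edges bz, bc, ac is
impossible in a relation web. -/
theorem config_bash {G : MGraph} (hG : G.IsRelWeb) {b a z c : ℕ}
    (hb : b ∈ G.verts) (ha : a ∈ G.verts) (hz : z ∈ G.verts) (hc : c ∈ G.verts)
    (dba : b ≠ a) (dbz : b ≠ z) (dbc : b ≠ c) (daz : a ≠ z) (dac : a ≠ c) (dzc : z ≠ c)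
    (hba : G.adjE b a) (hza : G.adjE z a) (hzc : G.adjE z c)
    (nbz : G.noEdge b z) (nbc : G.noEdge b c) (nac : G.noEdge a c) : False := by
  rcases adjE_cases hG hza with rza | lza | laz
  · -- R z a
    rcases adjE_cases hG hba with rba | lba | lab
    · -- R b a
      rcases adjE_cases hG hzc with rzc | lzc | lcz
      · -- all R : P4 (b,a,z,c)
        exact web_noP4 hG ⟨b, a, z, c, hb, ha, hz, hc, dba, dbz, dbc, daz, dac, dzc,
          rba, web_Rsymm hG _ _ rza, rzc, nbz.1, nbc.1, nac.1⟩
      · exact web_no3CT hG ⟨c, a, z, hc, ha, hz, fun h => dac h.symm, fun h => dzc h.symm,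
          daz, G.noEdge_symm nac, web_Rsymm hG _ _ rza, Or.inr lzc⟩
      · exact web_no3CT hG ⟨c, a, z, hc, ha, hz, fun h => dac h.symm, fun h => dzc h.symm,
          daz, G.noEdge_symm nac, web_Rsymm hG _ _ rza, Or.inl lcz⟩
    · exact web_no3CT hG ⟨b, z, a, hb, hz, ha, dbz, dba, fun h => daz h.symm,
        nbz, rza, Or.inl lba⟩
    · exact web_no3CT hG ⟨b, z, a, hb, hz, ha, dbz, dba, fun h => daz h.symm,
        nbz, rza, Or.inr lab⟩
  · -- lt z a
    rcases adjE_cases hG hba with rba | lba | lab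
    · exact web_no3CT hG ⟨z, b, a, hz, hb, ha, fun h => dbz h.symm, fun h => daz h.symm,
        dba, G.noEdge_symm nbz, rba, Or.inl lza⟩
    · -- lt b a, lt z a
      rcases adjE_cases hG hzc with rzc | lzc | lcz
      · exact web_no3CT hG ⟨a, c, z, ha, hc, hz, dac, daz, fun h => dzc h.symm,
          nac, web_Rsymm hG _ _ rzc, Or.inr lza⟩
      · -- N (b,a,z,c)
        exact web_noN hG ⟨b, a, z, c, hb, ha, hz, hc, dba, dbz, dbc, daz, dac, dzc,
          lba, lza, lzc, nbz.2.2.1, nbz.2.2.2, nbc.2.2.1, nbc.2.2.2,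
          nac.2.2.1, nac.2.2.2⟩
      · exact nac.2.2.2 (web_trans hG c z a lcz lza)
    · -- lt a b, lt z a : lt z b
      exact nbz.2.2.2 (web_trans hG z a b lza lab)
  · -- lt a z
    rcases adjE_cases hG hba with rba | lba | lab
    · exact web_no3CT hG ⟨z, b, a, hz, hb, ha, fun h => dbz h.symm, fun h => daz h.symm,
        dba, G.noEdge_symm nbz, rba, Or.inr laz⟩
    · -- lt b a, lt a z : lt b z
      exact nbz.2.2.1 (web_trans hG b a z lba laz)
    · -- lt a b, lt a z
      rcases adjE_cases hG hzc with rzc | lzc | lcz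
      · exact web_no3CT hG ⟨a, c, z, ha, hc, hz, dac, daz, fun h => dzc h.symm,
          nac, web_Rsymm hG _ _ rzc, Or.inl laz⟩
      · exact nac.2.2.1 (web_trans hG a z c laz lzc)
      · -- N (c,z,a,b)
        exact web_noN hG ⟨c, z, a, b, hc, hz, ha, hb, fun h => dzc h.symm,
          fun h => dac h.symm, fun h => dbc h.symm, fun h => daz h.symm,
          fun h => dbz h.symm, fun h => dba h.symm,
          lcz, laz, lab, nac.2.2.2, nac.2.2.1, nbc.2.2.2, nbc.2.2.1,
          nbz.2.2.2, nbz.2.2.1⟩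

theorem step_reach {s : Finset ℕ} {e : ℕ → ℕ → Prop} {x y : ℕ}
    (hx : x ∈ s) (hy : y ∈ s) (h : e x y) : Reach s e x y :=
  Relation.ReflTransGen.single ⟨hx, hy, h⟩

theorem not_reach_ne {s : Finset ℕ} {e : ℕ → ℕ → Prop} {x y : ℕ}
    (h : ¬ Reach s e x y) : x ≠ y := by
  rintro rfl; exact h Relation.ReflTransGen.refl

theorem not_reach_not_e {s : Finset ℕ} {e : ℕ → ℕ → Prop} {x y : ℕ}
    (hx : x ∈ s) (hy : y ∈ s) (h : ¬ Reach s e x y) : ¬ e x y :=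
  fun he => h (step_reach hx hy he)

/-- Core lemma, case A: if `G` is a web all of whose three derived graphs are
connected, then removing any vertex leaves the adjacency graph connected. -/
theorem coreA {G : MGraph} (hG : G.IsRelWeb) {z : ℕ} (hz : z ∈ G.verts)
    (hadj : Conn G.verts G.adjE) (hcor : Conn G.verts G.corE)
    (hinc : Conn G.verts G.incE)
    (hdis : ¬ Conn (G.verts.erase z) G.adjE) : False := by
  set s' := G.verts.erase z with hs'
  have hsub : s' ⊆ G.verts := Finset.erase_subset _ _
  simp only [Conn, not_forall] at hdis
  obtain ⟨p, hp, q, hq, hpq⟩ := hdis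
  have hpz : p ≠ z := (Finset.mem_erase.1 hp).1
  have hqz : q ≠ z := (Finset.mem_erase.1 hq).1
  have rsymm : ∀ {x y : ℕ}, Reach s' G.adjE x y → Reach s' G.adjE y x :=
    fun h => reach_symm (G.adjE_symm) h
  by_cases hA1 : ∀ v ∈ s', G.adjE z v
  · by_cases hR : ∀ v ∈ s', G.R z v
    · -- z is corE-isolated
      have : p = z := reach_isolated (s := G.verts) (e := G.corE) (fun w hw hc => by
        by_cases hwz : w = z
        · exact hc.1 hwz.symm
        · exact hc.2.1 (hR w (Finset.mem_erase.2 ⟨hwz, hw⟩))) (hcor z hz p (hsub hp))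
      exact hpz this
    · by_cases hL : ∀ v ∈ s', G.lt z v ∨ G.lt v z
      · -- z is incE-isolated
        have : p = z := reach_isolated (s := G.verts) (e := G.incE) (fun w hw hc => by
          by_cases hwz : w = z
          · exact hc.1 hwz.symm
          · rcases hL w (Finset.mem_erase.2 ⟨hwz, hw⟩) with h | h
            · exact hc.2.1 h
            · exact hc.2.2 h) (hinc z hz p (hsub hp))
        exact hpz this
      · push_neg at hR hL
        obtain ⟨v, hv, hv2⟩ := hL
        obtain ⟨u, hu, hu2⟩ := hR
        -- u is lt-type, v is R-type
        have hvR : G.R z v := by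
          rcases adjE_cases hG (hA1 v hv) with h | h | h
          · exact h
          · exact absurd h hv2.1
          · exact absurd h hv2.2
        have huL : G.lt z u ∨ G.lt u z := by
          rcases adjE_cases hG (hA1 u hu) with h | h | h
          · exact absurd h hu2
          · exact Or.inl h
          · exact Or.inr h
        have huz : u ≠ z := (Finset.mem_erase.1 hu).1
        have hvz : v ≠ z := (Finset.mem_erase.1 hv).1
        by_cases hruv : Reach s' G.adjE v u
        · have ht : ∃ t ∈ s', ¬ Reach s' G.adjE v t := by
            by_cases h1 : Reach s' G.adjE v p
            · exact ⟨q, hq, fun h2 => hpq ((rsymm h1).trans' h2)⟩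
            · exact ⟨p, hp, h1⟩
          obtain ⟨t, ht, hvt⟩ := ht
          have htz : t ≠ z := (Finset.mem_erase.1 ht).1
          by_cases hRt : G.R z t
          · -- t is R-type : 3CT (u, t, z)
            have hntu : ¬ Reach s' G.adjE t u := fun h => hvt (hruv.trans' (rsymm h))
            have hne : G.noEdge t u := G.not_adjE_noEdge
              (not_reach_not_e ht (by exact (Finset.mem_erase.2 ⟨huz, hsub hu⟩)) hntu)
            exact web_no3CT hG ⟨u, t, z, hsub hu, hsub ht, hz,
              fun h => (not_reach_ne hntu) h.symm, huz, htz,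
              G.noEdge_symm hne, web_Rsymm hG _ _ hRt,
              (Or.symm huL)⟩
          · -- t is lt-type
            have htL : G.lt z t ∨ G.lt t z := by
              rcases adjE_cases hG (hA1 t ht) with h | h | h
              · exact absurd h hRt
              · exact Or.inl h
              · exact Or.inr h
            have hne : G.noEdge v t := G.not_adjE_noEdge (not_reach_not_e hv ht hvt)
            exact web_no3CT hG ⟨t, v, z, hsub ht, hsub hv, hz,
              fun h => (not_reach_ne hvt) h.symm, htz, hvz,
              G.noEdge_symm hne, web_Rsymm hG _ _ hvR,
              (Or.symm htL)⟩
        · have hne : G.noEdge v u := G.not_adjE_noEdge (not_reach_not_e hv hu hruv)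
          exact web_no3CT hG ⟨u, v, z, hsub hu, hsub hv, hz,
            fun h => (not_reach_ne hruv) h.symm, huz, hvz,
            G.noEdge_symm hne, web_Rsymm hG _ _ hvR,
            (Or.symm huL)⟩
  · push_neg at hA1
    obtain ⟨b, hb, hzb⟩ := hA1
    have hbz : b ≠ z := (Finset.mem_erase.1 hb).1
    have ht : ∃ t ∈ s', ¬ Reach s' G.adjE b t := by
      by_cases h1 : Reach s' G.adjE b p
      · exact ⟨q, hq, fun h2 => hpq ((rsymm h1).trans' h2)⟩
      · exact ⟨p, hp, h1⟩
    obtain ⟨t, ht, hbt⟩ := ht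
    have htz : t ≠ z := (Finset.mem_erase.1 ht).1
    -- find a with Reach' b a and adjE a z
    rcases reach_through (hadj b (hsub hb) t (hsub ht)) hbz htz with hcontra | ⟨a, haz, hba, hae⟩
    · exact hbt hcontra
    -- switch vertex
    obtain ⟨b₁, a₁, hb₁, ha₁, he₁, hnQ, hQ, hreachb₁⟩ :=
      reach_switch (Q := fun v => G.adjE z v) hba hzb (G.adjE_symm _ _ hae)
    -- find c on the t side
    rcases reach_through (hadj t (hsub ht) b (hsub hb)) htz hbz with hcontra | ⟨c, hcz, htc, hce⟩
    · exact hbt (rsymm hcontra)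
    have hreacha₁ : Reach s' G.adjE b a₁ := hreachb₁.tail ⟨hb₁, ha₁, he₁⟩
    have hna₁c : ¬ Reach s' G.adjE a₁ c := fun h => hbt (hreacha₁.trans' (h.trans' (rsymm htc)))
    have hnb₁c : ¬ Reach s' G.adjE b₁ c := fun h => hbt (hreachb₁.trans' (h.trans' (rsymm htc)))
    have hcs' : c ∈ s' := reach_mem htc ht
    have hb₁a₁ : b₁ ≠ a₁ := by rintro rfl; exact adjE_irrefl hG b₁ he₁
    exact config_bash hG (hsub hb₁) (hsub ha₁) hz (hsub hcs')
      hb₁a₁ (Finset.mem_erase.1 hb₁).1 (not_reach_ne hnb₁c)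
      (Finset.mem_erase.1 ha₁).1 (not_reach_ne hna₁c) (fun h => hcz h.symm)
      he₁ hQ (G.adjE_symm _ _ hce)
      (G.noEdge_symm (G.not_adjE_noEdge hnQ))
      (G.not_adjE_noEdge (not_reach_not_e hb₁ hcs' hnb₁c))
      (G.not_adjE_noEdge (not_reach_not_e ha₁ hcs' hna₁c))

/-- Core lemma, case C: analogous statement for the incomparability graph. -/
theorem coreC {G : MGraph} (hG : G.IsRelWeb) {z : ℕ} (hz : z ∈ G.verts)
    (hadj : Conn G.verts G.adjE) (hcor : Conn G.verts G.corE)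
    (hinc : Conn G.verts G.incE)
    (hdis : ¬ Conn (G.verts.erase z) G.incE) : False := by
  set s' := G.verts.erase z with hs'
  have hsub : s' ⊆ G.verts := Finset.erase_subset _ _
  simp only [Conn, not_forall] at hdis
  obtain ⟨p, hp, q, hq, hpq⟩ := hdis
  have hpz : p ≠ z := (Finset.mem_erase.1 hp).1
  have hqz : q ≠ z := (Finset.mem_erase.1 hq).1
  have rsymm : ∀ {x y : ℕ}, Reach s' G.incE x y → Reach s' G.incE y x :=
    fun h => reach_symm (G.incE_symm) h
  -- unreachable pairs are comparable
  have hcomp : ∀ {x y : ℕ}, x ∈ s' → y ∈ s' → ¬ Reach s' G.incE x y →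
      G.lt x y ∨ G.lt y x := by
    intro x y hx hy h
    have hne := not_reach_ne h
    have hni := not_reach_not_e hx hy h
    by_cases h1 : G.lt x y
    · exact Or.inl h1
    · by_cases h2 : G.lt y x
      · exact Or.inr h2
      · exact absurd ⟨hne, h1, h2⟩ hni
  by_cases hC1 : ∀ v ∈ s', G.incE z v
  · -- z incomparable to everything; show (R z ·) is constant on comparable pairs
    have key : ∀ x ∈ s', ∀ y ∈ s', (G.lt x y ∨ G.lt y x) → (G.R z x ↔ G.R z y) := by
      intro x hx y hy hxy
      have hxz : x ≠ z := (Finset.mem_erase.1 hx).1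
      have hyz : y ≠ z := (Finset.mem_erase.1 hy).1
      have hxyne : x ≠ y := by
        rintro rfl; rcases hxy with h | h <;> exact web_ltirrefl hG x h
      constructor
      · intro hzx
        by_contra hzy
        have hnzy : G.noEdge z y := ⟨hzy, fun h => hzy (web_Rsymm hG _ _ h),
          (hC1 y hy).2.1, (hC1 y hy).2.2⟩
        exact web_no3CT hG ⟨y, z, x, hsub hy, hz, hsub hx, hyz,
          fun h => hxyne h.symm, fun h => hxz h.symm,
          G.noEdge_symm hnzy, hzx, Or.symm hxy⟩
      · intro hzy
        by_contra hzx
        have hnzx : G.noEdge z x := ⟨hzx, fun h => hzx (web_Rsymm hG _ _ h),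
          (hC1 x hx).2.1, (hC1 x hx).2.2⟩
        exact web_no3CT hG ⟨x, z, y, hsub hx, hz, hsub hy, hxz, hxyne,
          fun h => hyz h.symm, G.noEdge_symm hnzx, hzy, hxy⟩
    have hpq' : G.lt p q ∨ G.lt q p := hcomp hp hq hpq
    have hconst : ∀ x ∈ s', (G.R z x ↔ G.R z p) := by
      intro x hx
      by_cases h1 : Reach s' G.incE x p
      · by_cases h2 : Reach s' G.incE x q
        · exact absurd ((rsymm h1).trans' h2) hpq
        · exact (key x hx q hq (hcomp hx hq h2)).trans (key q hq p hp (Or.symm hpq')).symm.symm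
      · exact key x hx p hp (hcomp hx hp h1)
    by_cases hRp : G.R z p
    · -- z corE-isolated
      have : p = z := reach_isolated (s := G.verts) (e := G.corE) (fun w hw hc => by
        by_cases hwz : w = z
        · exact hc.1 hwz.symm
        · exact hc.2.1 ((hconst w (Finset.mem_erase.2 ⟨hwz, hw⟩)).2 hRp))
        (hcor z hz p (hsub hp))
      exact hpz this
    · -- z adjE-isolated
      have : p = z := reach_isolated (s := G.verts) (e := G.adjE) (fun w hw ha => by
        by_cases hwz : w = z
        · exact adjE_irrefl hG z (hwz ▸ ha)
        · have hw' : w ∈ s' := Finset.mem_erase.2 ⟨hwz, hw⟩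
          have h1 : ¬ G.R z w := fun h => hRp ((hconst w hw').1 h)
          rcases ha with h | h | h | h
          · exact h1 h
          · exact h1 (web_Rsymm hG _ _ h)
          · exact (hC1 w hw').2.1 h
          · exact (hC1 w hw').2.2 h)
        (hadj z hz p (hsub hp))
      exact hpz this
  · push_neg at hC1
    obtain ⟨b, hb, hzb⟩ := hC1
    have hbz : b ≠ z := (Finset.mem_erase.1 hb).1
    -- z is comparable to b
    have hzbcomp : G.lt z b ∨ G.lt b z := by
      by_cases h1 : G.lt z b
      · exact Or.inl h1
      · by_cases h2 : G.lt b z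
        · exact Or.inr h2
        · exact absurd ⟨fun h => hbz h.symm, h1, h2⟩ hzb
    have ht : ∃ t ∈ s', ¬ Reach s' G.incE b t := by
      by_cases h1 : Reach s' G.incE b p
      · exact ⟨q, hq, fun h2 => hpq ((rsymm h1).trans' h2)⟩
      · exact ⟨p, hp, h1⟩
    obtain ⟨t, ht, hbt⟩ := ht
    have htz : t ≠ z := (Finset.mem_erase.1 ht).1
    rcases reach_through (hinc b (hsub hb) t (hsub ht)) hbz htz with hcontra | ⟨a, haz, hba, hae⟩
    · exact hbt hcontra
    obtain ⟨b₁, a₁, hb₁, ha₁, he₁, hnQ, hQ, hreachb₁⟩ :=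
      reach_switch (Q := fun v => G.incE z v) hba hzb (G.incE_symm _ _ hae)
    rcases reach_through (hinc t (hsub ht) b (hsub hb)) htz hbz with hcontra | ⟨c, hcz, htc, hce⟩
    · exact hbt (rsymm hcontra)
    have hzc : G.incE z c := G.incE_symm _ _ hce
    have hreacha₁ : Reach s' G.incE b a₁ := hreachb₁.tail ⟨hb₁, ha₁, he₁⟩
    have hna₁c : ¬ Reach s' G.incE a₁ c := fun h => hbt (hreacha₁.trans' (h.trans' (rsymm htc)))
    have hnb₁c : ¬ Reach s' G.incE b₁ c := fun h => hbt (hreachb₁.trans' (h.trans' (rsymm htc)))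
    have hcs' : c ∈ s' := reach_mem htc ht
    have hb₁z : b₁ ≠ z := (Finset.mem_erase.1 hb₁).1
    have ha₁z : a₁ ≠ z := (Finset.mem_erase.1 ha₁).1
    have hcza : c ≠ z := (Finset.mem_erase.1 hcs').1
    -- z comparable to b₁
    have hzb₁ : G.lt z b₁ ∨ G.lt b₁ z := by
      by_cases h1 : G.lt z b₁
      · exact Or.inl h1
      · by_cases h2 : G.lt b₁ z
        · exact Or.inr h2
        · exact absurd ⟨fun h => hb₁z h.symm, h1, h2⟩ hnQ
    have hac : G.lt a₁ c ∨ G.lt c a₁ := hcomp ha₁ hcs' hna₁c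
    have hbc : G.lt b₁ c ∨ G.lt c b₁ := hcomp hb₁ hcs' hnb₁c
    have hb₁a₁ : b₁ ≠ a₁ := he₁.1
    rcases hac with hac | hac <;> rcases hbc with hbc | hbc
    · -- both below c
      have hbz₁ : G.lt b₁ z := by
        rcases hzb₁ with h | h
        · exact absurd (web_trans hG z b₁ c h hbc) hzc.2.1
        · exact h
      exact web_noN hG ⟨a₁, c, b₁, z, hsub ha₁, hsub hcs', hsub hb₁, hz,
        not_reach_ne hna₁c, fun h => hb₁a₁ h.symm, ha₁z,
        fun h => (not_reach_ne hnb₁c) h.symm, hcza, hb₁z,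
        hac, hbc, hbz₁, he₁.2.2, he₁.2.1, hQ.2.2, hQ.2.1, hzc.2.2, hzc.2.1⟩
    · exact he₁.2.2 (web_trans hG a₁ c b₁ hac hbc)
    · exact he₁.2.1 (web_trans hG b₁ c a₁ hbc hac)
    · -- both above c
      have hzb₁' : G.lt z b₁ := by
        rcases hzb₁ with h | h
        · exact h
        · exact absurd (web_trans hG c b₁ z hbc h) hzc.2.2
      exact web_noN hG ⟨z, b₁, c, a₁, hz, hsub hb₁, hsub hcs', hsub ha₁,
        fun h => hb₁z h.symm, fun h => hcza h.symm, fun h => ha₁z h.symm,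
        not_reach_ne hnb₁c, hb₁a₁, fun h => (not_reach_ne hna₁c) h.symm,
        hzb₁', hbc, hac, hzc.2.1, hzc.2.2, hQ.2.1, hQ.2.2, he₁.2.1, he₁.2.2⟩

theorem not_noEdge_cases {G : MGraph} (hG : G.IsRelWeb) {u v : ℕ}
    (h : ¬ G.noEdge u v) : G.R u v ∨ G.lt u v ∨ G.lt v u := by
  by_cases h1 : G.R u v
  · exact Or.inl h1
  · by_cases h2 : G.lt u v
    · exact Or.inr (Or.inl h2)
    · by_cases h3 : G.lt v u
      · exact Or.inr (Or.inr h3)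
      · exact absurd ⟨h1, fun h' => h1 (web_Rsymm hG _ _ h'), h2, h3⟩ h

/-- The "complement" of a mixed graph: `R` becomes no-edge, `lt` is kept. -/
def dualW (G : MGraph) : MGraph where
  verts := G.verts
  R := fun u v => u ≠ v ∧ u ∈ G.verts ∧ v ∈ G.verts ∧ G.noEdge u v
  lt := G.lt

theorem dualW_isRelWeb {G : MGraph} (hG : G.IsRelWeb) : (G.dualW).IsRelWeb := by
  refine ⟨⟨?_, ?_, ?_, ?_, ?_, ?_⟩, ?_, ?_, ?_, ?_, ?_⟩
  · rintro u v ⟨hne, hu, hv, hn⟩; exact ⟨hne.symm, hv, hu, G.noEdge_symm hn⟩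
  · rintro v ⟨hne, _⟩; exact hne rfl
  · show ∀ v, ¬ G.lt v v
    exact web_ltirrefl hG
  · rintro u v ⟨⟨_, _, _, hn⟩, hl⟩; exact hn.2.2.1 hl
  · rintro u v ⟨_, hu, hv, _⟩; exact ⟨hu, hv⟩
  · show ∀ u v, G.lt u v → u ∈ G.verts ∧ v ∈ G.verts
    exact web_ltmem hG
  · show G.verts.Nonempty
    exact web_nonempty hG
  · show ∀ u v w, G.lt u v → G.lt v w → G.lt u w
    exact web_trans hG
  · -- no P4 in the complement
    rintro ⟨w, x, y, z, hw, hx, hy, hz, d1, d2, d3, d4, d5, d6, e1, e2, e3, n1, n2, n3⟩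
    have nwx : G.noEdge w x := e1.2.2.2
    have nxy : G.noEdge x y := e2.2.2.2
    have nyz : G.noEdge y z := e3.2.2.2
    have p1 : G.R w y ∨ G.lt w y ∨ G.lt y w :=
      not_noEdge_cases hG (fun h => n1 ⟨d2, hw, hy, h⟩)
    have p2 : G.R w z ∨ G.lt w z ∨ G.lt z w :=
      not_noEdge_cases hG (fun h => n2 ⟨d3, hw, hz, h⟩)
    have p3 : G.R x z ∨ G.lt x z ∨ G.lt z x :=
      not_noEdge_cases hG (fun h => n3 ⟨d5, hx, hz, h⟩)
    rcases p1 with rwy | lwy | lyw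
    · rcases p2 with rwz | p2l
      · rcases p3 with rxz | p3l
        · -- P4 (x,z,w,y)
          exact web_noP4 hG ⟨x, z, w, y, hx, hz, hw, hy, d5, fun h => d1 h.symm, d4,
            fun h => d3 h.symm, fun h => d6 h.symm, d2,
            rxz, web_Rsymm hG _ _ rwz, rwy, nwx.2.1, nxy.1, nyz.2.1⟩
        · -- 3CT (x, w, z)
          exact web_no3CT hG ⟨x, w, z, hx, hw, hz, fun h => d1 h.symm, d5, d3,
            G.noEdge_symm nwx, rwz, p3l⟩
      · -- 3CT (z, y, w)
        exact web_no3CT hG ⟨z, y, w, hz, hy, hw, fun h => d6 h.symm, fun h => d3 h.symm,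
          fun h => d2 h.symm, G.noEdge_symm nyz, web_Rsymm hG _ _ rwy, Or.symm p2l⟩
    · -- lt w y
      rcases p2 with rwz | lwz | lzw
      · rcases p3 with rxz | p3l
        · exact web_no3CT hG ⟨y, z, w, hy, hz, hw, d6, fun h => d2 h.symm,
            fun h => d3 h.symm, nyz, web_Rsymm hG _ _ rwz, Or.inr lwy⟩
        · exact web_no3CT hG ⟨x, w, z, hx, hw, hz, fun h => d1 h.symm, d5, d3,
            G.noEdge_symm nwx, rwz, p3l⟩
      · -- lt w y, lt w z
        rcases p3 with rxz | lxz | lzx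
        · exact web_no3CT hG ⟨w, x, z, hw, hx, hz, d1, d3, d5, nwx, rxz, Or.inl lwz⟩
        · -- N (x,z,w,y)
          exact web_noN hG ⟨x, z, w, y, hx, hz, hw, hy, d5, fun h => d1 h.symm, d4,
            fun h => d3 h.symm, fun h => d6 h.symm, d2,
            lxz, lwz, lwy, nwx.2.2.2, nwx.2.2.1, nxy.2.2.1, nxy.2.2.2,
            nyz.2.2.2, nyz.2.2.1⟩
        · exact nwx.2.2.1 (web_trans hG w z x lwz lzx)
      · exact nyz.2.2.2 (web_trans hG z w y lzw lwy)
    · -- lt y w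
      rcases p2 with rwz | lwz | lzw
      · rcases p3 with rxz | p3l
        · exact web_no3CT hG ⟨y, z, w, hy, hz, hw, d6, fun h => d2 h.symm,
            fun h => d3 h.symm, nyz, web_Rsymm hG _ _ rwz, Or.inl lyw⟩
        · exact web_no3CT hG ⟨x, w, z, hx, hw, hz, fun h => d1 h.symm, d5, d3,
            G.noEdge_symm nwx, rwz, p3l⟩
      · exact nyz.2.2.1 (web_trans hG y w z lyw lwz)
      · -- lt y w, lt z w
        rcases p3 with rxz | lxz | lzx
        · exact web_no3CT hG ⟨w, x, z, hw, hx, hz, d1, d3, d5, nwx, rxz, Or.inr lzw⟩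
        · exact nwx.2.2.2 (web_trans hG x z w lxz lzw)
        · -- N (y,w,z,x)
          exact web_noN hG ⟨y, w, z, x, hy, hw, hz, hx, fun h => d2 h.symm, d6,
            fun h => d4 h.symm, d3, d1, fun h => d5 h.symm,
            lyw, lzw, lzx, nyz.2.2.1, nyz.2.2.2, nxy.2.2.2, nxy.2.2.1,
            nwx.2.2.1, nwx.2.2.2⟩
  · -- no N in the complement : same lt
    rintro ⟨u, v, y, z, hu, hv, hy, hz, d1, d2, d3, d4, d5, d6, e1, e2, e3,
      n1, n2, n3, n4, n5, n6⟩
    exact web_noN hG ⟨u, v, y, z, hu, hv, hy, hz, d1, d2, d3, d4, d5, d6, e1, e2, e3,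
      n1, n2, n3, n4, n5, n6⟩
  · -- no 3CT in the complement
    rintro ⟨u, w, v, hu, hw, hv, d1, d2, d3, hne, hr, hlt⟩
    -- in the complement: `hne` says u,w are R-related in G; `hr` says w,v have no edge
    have hRuw : G.R u w := by
      rcases not_noEdge_cases hG (show ¬ G.noEdge u w from fun h => hne.1 ⟨d1, hu, hw, h⟩)
        with h | h | h
      · exact h
      · exact absurd h hne.2.2.1
      · exact absurd h hne.2.2.2
    exact web_no3CT hG ⟨v, w, u, hv, hw, hu, fun h => d3 h.symm, fun h => d2 h.symm,
      fun h => d1 h.symm, G.noEdge_symm hr.2.2.2, web_Rsymm hG _ _ hRuw, Or.symm hlt⟩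

theorem conn_congr {s : Finset ℕ} {e e' : ℕ → ℕ → Prop}
    (h : ∀ a b, a ∈ s → b ∈ s → (e a b ↔ e' a b)) : Conn s e ↔ Conn s e' := by
  constructor
  · intro hc u hu v hv
    exact reach_mono (fun a b ha hb hab => (h a b ha hb).1 hab) (hc u hu v hv)
  · intro hc u hu v hv
    exact reach_mono (fun a b ha hb hab => (h a b ha hb).2 hab) (hc u hu v hv)

theorem dual_adjE_iff {G : MGraph} (hG : G.IsRelWeb) {a b : ℕ}
    (ha : a ∈ G.verts) (hb : b ∈ G.verts) : (G.dualW).adjE a b ↔ G.corE a b := by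
  constructor
  · rintro (⟨hne, _, _, hn⟩ | ⟨hne, _, _, hn⟩ | hl | hl)
    · exact ⟨hne, hn.1, hn.2.1⟩
    · exact ⟨hne.symm, hn.2.1, hn.1⟩
    · exact ⟨(web_lt_not_R hG hl).2.2, (web_lt_not_R hG hl).1, (web_lt_not_R hG hl).2.1⟩
    · exact ⟨fun h => (web_lt_not_R hG hl).2.2 h.symm, (web_lt_not_R hG hl).2.1,
        (web_lt_not_R hG hl).1⟩
  · rintro ⟨hne, h1, h2⟩
    by_cases hl : G.lt a b
    · exact Or.inr (Or.inr (Or.inl hl))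
    · by_cases hl' : G.lt b a
      · exact Or.inr (Or.inr (Or.inr hl'))
      · exact Or.inl ⟨hne, ha, hb, h1, h2, hl, hl'⟩

theorem dual_corE_iff {G : MGraph} (hG : G.IsRelWeb) {a b : ℕ}
    (ha : a ∈ G.verts) (hb : b ∈ G.verts) : (G.dualW).corE a b ↔ G.adjE a b := by
  constructor
  · rintro ⟨hne, h1, h2⟩
    rcases not_noEdge_cases hG (fun h => h1 ⟨hne, ha, hb, h⟩) with h | h | h
    · exact Or.inl h
    · exact Or.inr (Or.inr (Or.inl h))
    · exact Or.inr (Or.inr (Or.inr h))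
  · intro h
    have hne : a ≠ b := by rintro rfl; exact adjE_irrefl hG a h
    refine ⟨hne, fun h' => ?_, fun h' => ?_⟩
    · rcases h with h | h | h | h
      · exact h'.2.2.2.1 h
      · exact h'.2.2.2.2.1 h
      · exact h'.2.2.2.2.2.1 h
      · exact h'.2.2.2.2.2.2 h
    · rcases h with h | h | h | h
      · exact h'.2.2.2.2.1 h
      · exact h'.2.2.2.1 h
      · exact h'.2.2.2.2.2.2 h
      · exact h'.2.2.2.2.2.1 h

theorem induce_adjE_iff {G : MGraph} {s : Finset ℕ} {a b : ℕ}
    (ha : a ∈ s) (hb : b ∈ s) : (G.induce s).adjE a b ↔ G.adjE a b := by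
  unfold MGraph.adjE MGraph.induce
  simp only [ha, hb, true_and]

theorem induce_corE_iff {G : MGraph} {s : Finset ℕ} {a b : ℕ}
    (ha : a ∈ s) (hb : b ∈ s) : (G.induce s).corE a b ↔ G.corE a b := by
  unfold MGraph.corE MGraph.induce
  simp only [ha, hb, true_and]

theorem induce_incE_iff {G : MGraph} {s : Finset ℕ} {a b : ℕ}
    (ha : a ∈ s) (hb : b ∈ s) : (G.induce s).incE a b ↔ G.incE a b := by
  unfold MGraph.incE MGraph.induce
  simp only [ha, hb, true_and]

/-- The trichotomy: in a web with at least two vertices, one of the three derived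
graphs is disconnected. -/
theorem trichotomy : ∀ (n : ℕ) (G : MGraph), G.verts.card ≤ n → G.IsRelWeb →
    2 ≤ G.verts.card →
    ¬ Conn G.verts G.adjE ∨ ¬ Conn G.verts G.corE ∨ ¬ Conn G.verts G.incE := by
  intro n
  induction n with
  | zero => intro G hcard _ h2; omega
  | succ n ih =>
    intro G hcard hG h2
    by_contra hcon
    push_neg at hcon
    obtain ⟨hadj, hcor, hinc⟩ := hcon
    by_cases hn2 : G.verts.card = 2
    · -- base case: exactly two vertices
      obtain ⟨u, v, huv, hverts⟩ := Finset.card_eq_two.1 hn2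
      have hu : u ∈ G.verts := by rw [hverts]; exact Finset.mem_insert_self _ _
      have hv : v ∈ G.verts := by
        rw [hverts]; exact Finset.mem_insert_of_mem (Finset.mem_singleton_self _)
      by_cases hR : G.R u v
      · have : v = u := reach_isolated (s := G.verts) (e := G.corE) (fun w hw hc => by
          rw [hverts] at hw
          rcases Finset.mem_insert.1 hw with rfl | hw
          · exact hc.1 rfl
          · rw [Finset.mem_singleton] at hw; subst hw; exact hc.2.1 hR)
          (hcor u hu v hv)
        exact huv this.symm
      · by_cases hL : G.lt u v ∨ G.lt v u
        · have : v = u := reach_isolated (s := G.verts) (e := G.incE) (fun w hw hc => by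
            rw [hverts] at hw
            rcases Finset.mem_insert.1 hw with rfl | hw
            · exact hc.1 rfl
            · rw [Finset.mem_singleton] at hw; subst hw
              rcases hL with h | h
              · exact hc.2.1 h
              · exact hc.2.2 h)
            (hinc u hu v hv)
          exact huv this.symm
        · push_neg at hL
          have : v = u := reach_isolated (s := G.verts) (e := G.adjE) (fun w hw ha => by
            rw [hverts] at hw
            rcases Finset.mem_insert.1 hw with rfl | hw
            · exact adjE_irrefl hG _ ha
            · rw [Finset.mem_singleton] at hw; subst hw
              rcases ha with h | h | h | h
              · exact hR h
              · exact hR (web_Rsymm hG _ _ h)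
              · exact hL.1 h
              · exact hL.2 h)
            (hadj u hu v hv)
          exact huv this.symm
    · -- at least three vertices
      have h3 : 3 ≤ G.verts.card := by omega
      obtain ⟨z, hz⟩ := web_nonempty hG
      set s' := G.verts.erase z with hs'
      have hsub : s' ⊆ G.verts := Finset.erase_subset _ _
      have hcard' : s'.card = G.verts.card - 1 := Finset.card_erase_of_mem hz
      have hne' : (2 : ℕ) ≤ s'.card := by omega
      have hG' : (G.induce s').IsRelWeb :=
        induce_isRelWeb hG hsub (Finset.card_pos.1 (by omega))
      have hiv : (G.induce s').verts = s' := rfl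
      rcases ih (G.induce s') (by rw [hiv]; omega) hG' (by rw [hiv]; exact hne')
        with h | h | h
      · rw [hiv] at h
        exact coreA hG hz hadj hcor hinc (fun hc => h ((conn_congr
          (fun a b ha hb => (induce_adjE_iff ha hb).symm)).1 hc))
      · -- dualize
        rw [hiv] at h
        have hGd := dualW_isRelWeb hG
        have hvd : (G.dualW).verts = G.verts := rfl
        refine coreA hGd (z := z) hz ?_ ?_ ?_ ?_
        · exact (conn_congr (fun a b ha hb => (dual_adjE_iff hG ha hb))).2 hcor
        · exact (conn_congr (fun a b ha hb => (dual_corE_iff hG ha hb))).2 hadj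
        · exact hinc
        · intro hc
          refine h ((conn_congr (fun a b ha hb => ?_)).1 hc)
          exact ((dual_adjE_iff hG (hsub ha) (hsub hb)).trans
            (induce_corE_iff ha hb).symm)
      · rw [hiv] at h
        exact coreC hG hz hadj hcor hinc (fun hc => h ((conn_congr
          (fun a b ha hb => (induce_incE_iff ha hb).symm)).1 hc))

/-- Extract a split from disconnectedness. -/
theorem split_of_not_conn {s : Finset ℕ} {e : ℕ → ℕ → Prop}
    (h : ¬ Conn s e) : ∃ X Y : Finset ℕ, X.Nonempty ∧ Y.Nonempty ∧ Disjoint X Y ∧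
      X ∪ Y = s ∧ ∀ x ∈ X, ∀ y ∈ Y, ¬ e x y := by
  classical
  simp only [Conn, not_forall] at h
  obtain ⟨p, hp, q, hq, hpq⟩ := h
  refine ⟨s.filter (fun x => Reach s e p x), s \ s.filter (fun x => Reach s e p x),
    ⟨p, Finset.mem_filter.2 ⟨hp, Relation.ReflTransGen.refl⟩⟩,
    ⟨q, Finset.mem_sdiff.2 ⟨hq, fun hc => hpq (Finset.mem_filter.1 hc).2⟩⟩,
    Finset.disjoint_sdiff, Finset.union_sdiff_of_subset (Finset.filter_subset _ _), ?_⟩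
  intro x hx y hy hexy
  rw [Finset.mem_filter] at hx
  rw [Finset.mem_sdiff] at hy
  exact hy.2 (Finset.mem_filter.2 ⟨hy.1, hx.2.tail ⟨hx.1, hy.1, hexy⟩⟩)

end MGraph

@[simp] theorem tm_mod (n : ℕ) : 2 * n % 2 = 0 := by omega
@[simp] theorem tm_div (n : ℕ) : 2 * n / 2 = n := by omega
@[simp] theorem tmo_mod (n : ℕ) : (2 * n + 1) % 2 = 1 := by omega
@[simp] theorem tmo_div (n : ℕ) : (2 * n + 1) / 2 = n := by omega

namespace LabGraph

/-- The key invariant of translations: edges stay inside the vertex set, the graph is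
properly labeled and satisfies the modality condition. -/
def GoodL (H : LabGraph) : Prop :=
  (∀ u v, H.R u v → u ∈ H.verts ∧ v ∈ H.verts) ∧
  (∀ u v, H.lt u v → u ∈ H.verts ∧ v ∈ H.verts) ∧
  (∀ v ∈ H.verts, (∃ w, H.lt v w) ↔ (H.lab v = GLabel.bang ∨ H.lab v = GLabel.quest)) ∧
  (∀ u v w, H.lt u w → H.lt v w → u ≠ v → H.lt u v ∨ H.lt v u)

theorem goodL_point {l : GLabel} (hl : l ≠ GLabel.bang) (hl' : l ≠ GLabel.quest) :
    GoodL (point l) := by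
  refine ⟨fun u v h => h.elim, fun u v h => h.elim, ?_, fun u v w h => h.elim⟩
  intro v _
  constructor
  · rintro ⟨w, hw⟩; exact hw.elim
  · rintro (h | h)
    · exact absurd h hl
    · exact absurd h hl'

theorem goodL_gparr {G H : LabGraph} (hG : GoodL G) (hH : GoodL H) :
    GoodL (G.gparr H) := by
  obtain ⟨hGr, hGl, hGp, hGm⟩ := hG
  obtain ⟨hHr, hHl, hHp, hHm⟩ := hH
  refine ⟨?_, ?_, ?_, ?_⟩
  · rintro u v (⟨hu, hv, hr⟩ | ⟨hu, hv, hr⟩)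
    · obtain ⟨h1, h2⟩ := hGr _ _ hr
      exact ⟨Finset.mem_union_left _ (Finset.mem_image.2 ⟨u/2, h1, by omega⟩),
        Finset.mem_union_left _ (Finset.mem_image.2 ⟨v/2, h2, by omega⟩)⟩
    · obtain ⟨h1, h2⟩ := hHr _ _ hr
      exact ⟨Finset.mem_union_right _ (Finset.mem_image.2 ⟨u/2, h1, by omega⟩),
        Finset.mem_union_right _ (Finset.mem_image.2 ⟨v/2, h2, by omega⟩)⟩
  · rintro u v (⟨hu, hv, hr⟩ | ⟨hu, hv, hr⟩)
    · obtain ⟨h1, h2⟩ := hGl _ _ hr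
      exact ⟨Finset.mem_union_left _ (Finset.mem_image.2 ⟨u/2, h1, by omega⟩),
        Finset.mem_union_left _ (Finset.mem_image.2 ⟨v/2, h2, by omega⟩)⟩
    · obtain ⟨h1, h2⟩ := hHl _ _ hr
      exact ⟨Finset.mem_union_right _ (Finset.mem_image.2 ⟨u/2, h1, by omega⟩),
        Finset.mem_union_right _ (Finset.mem_image.2 ⟨v/2, h2, by omega⟩)⟩
  · intro v hv
    rcases Finset.mem_union.1 hv with h | h
    · obtain ⟨n, hn, rfl⟩ := Finset.mem_image.1 h
      constructor
      · rintro ⟨w, (⟨h1, h2, hl⟩ | ⟨h1, h2, hl⟩)⟩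
        · have hlab := (hGp _ hn).1 ⟨w/2, by simpa using hl⟩
          simpa [gparr] using hlab
        · simp at h1
      · intro hlab
        have hlab' : G.lab n = .bang ∨ G.lab n = .quest := by simpa [gparr] using hlab
        obtain ⟨w, hw⟩ := (hGp _ hn).2 hlab'
        exact ⟨2*w, Or.inl ⟨by omega, by omega, by simpa using hw⟩⟩
    · obtain ⟨n, hn, rfl⟩ := Finset.mem_image.1 h
      constructor
      · rintro ⟨w, (⟨h1, h2, hl⟩ | ⟨h1, h2, hl⟩)⟩
        · simp at h1
        · have hlab := (hHp _ hn).1 ⟨w/2, by simpa using hl⟩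
          simpa [gparr] using hlab
      · intro hlab
        have hlab' : H.lab n = .bang ∨ H.lab n = .quest := by simpa [gparr] using hlab
        obtain ⟨w, hw⟩ := (hHp _ hn).2 hlab'
        exact ⟨2*w+1, Or.inr ⟨by omega, by omega, by simpa using hw⟩⟩
  · rintro u v w (⟨h1, h2, hl⟩ | ⟨h1, h2, hl⟩) (⟨h3, h4, hl'⟩ | ⟨h3, h4, hl'⟩) hne
    · have huv : u/2 ≠ v/2 := fun h => hne (by omega)
      rcases hGm _ _ _ hl hl' huv with h | h
      · exact Or.inl (Or.inl ⟨h1, h3, h⟩)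
      · exact Or.inr (Or.inl ⟨h3, h1, h⟩)
    · omega
    · omega
    · have huv : u/2 ≠ v/2 := fun h => hne (by omega)
      rcases hHm _ _ _ hl hl' huv with h | h
      · exact Or.inl (Or.inr ⟨h1, h3, h⟩)
      · exact Or.inr (Or.inr ⟨h3, h1, h⟩)

theorem goodL_gtens {G H : LabGraph} (hG : GoodL G) (hH : GoodL H) :
    GoodL (G.gtens H) := by
  obtain ⟨hr, hl, hp, hm⟩ := goodL_gparr hG hH
  refine ⟨?_, hl, hp, hm⟩
  rintro u v (h | ⟨h1, h2, h3, h4⟩ | ⟨h1, h2, h3, h4⟩)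
  · exact hr _ _ h
  · exact ⟨Finset.mem_union_left _ (Finset.mem_image.2 ⟨u/2, h3, by omega⟩),
      Finset.mem_union_right _ (Finset.mem_image.2 ⟨v/2, h4, by omega⟩)⟩
  · exact ⟨Finset.mem_union_right _ (Finset.mem_image.2 ⟨u/2, h3, by omega⟩),
      Finset.mem_union_left _ (Finset.mem_image.2 ⟨v/2, h4, by omega⟩)⟩

theorem goodL_gseq_point {l : GLabel} (hl : l = GLabel.bang ∨ l = GLabel.quest)
    {K : LabGraph} (hK : GoodL K) (hne : K.verts.Nonempty) :
    GoodL ((point l).gseq K) := by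
  obtain ⟨hKr, hKl, hKp, hKm⟩ := hK
  refine ⟨?_, ?_, ?_, ?_⟩
  · rintro u v (⟨_, _, hr⟩ | ⟨hu, hv, hr⟩)
    · exact hr.elim
    · obtain ⟨h1, h2⟩ := hKr _ _ hr
      exact ⟨Finset.mem_union_right _ (Finset.mem_image.2 ⟨u/2, h1, by omega⟩),
        Finset.mem_union_right _ (Finset.mem_image.2 ⟨v/2, h2, by omega⟩)⟩
  · rintro u v ((⟨_, _, hr⟩ | ⟨hu, hv, hr⟩) | ⟨h1, h2, h3, h4⟩)
    · exact hr.elim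
    · obtain ⟨hb1, hb2⟩ := hKl _ _ hr
      exact ⟨Finset.mem_union_right _ (Finset.mem_image.2 ⟨u/2, hb1, by omega⟩),
        Finset.mem_union_right _ (Finset.mem_image.2 ⟨v/2, hb2, by omega⟩)⟩
    · simp only [point, Finset.mem_singleton] at h3
      refine ⟨Finset.mem_union_left _ (Finset.mem_image.2 ⟨0, Finset.mem_singleton_self 0,
        by omega⟩), Finset.mem_union_right _ (Finset.mem_image.2 ⟨v/2, h4, by omega⟩)⟩
  · intro v hv
    rcases Finset.mem_union.1 hv with h | h
    · obtain ⟨n, hn, rfl⟩ := Finset.mem_image.1 h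
      simp only [point, Finset.mem_singleton] at hn
      subst hn
      constructor
      · intro _
        simpa [gseq, gparr, point] using hl
      · intro _
        obtain ⟨k, hk⟩ := hne
        exact ⟨2*k+1, Or.inr ⟨by omega, by omega, by simp [point],
          by simpa using hk⟩⟩
    · obtain ⟨n, hn, rfl⟩ := Finset.mem_image.1 h
      constructor
      · rintro ⟨w, ((⟨h1, _, _⟩ | ⟨h1, h2, hlw⟩) | ⟨h1, _, _⟩)⟩
        · simp at h1
        · have hlab := (hKp _ hn).1 ⟨w/2, by simpa using hlw⟩
          simpa [gseq, gparr] using hlab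
        · simp at h1
      · intro hlab
        have hlab' : K.lab n = .bang ∨ K.lab n = .quest := by
          simpa [gseq, gparr] using hlab
        obtain ⟨w, hw⟩ := (hKp _ hn).2 hlab'
        exact ⟨2*w+1, Or.inl (Or.inr ⟨by omega, by omega, by simpa using hw⟩)⟩
  · rintro u v w (((⟨_, _, h⟩ | ⟨h1, h2, hl1⟩) | ⟨h1, h2, h3, h4⟩))
      h2' hne
    · exact h.elim
    · -- u odd
      rcases h2' with ((⟨h1', _, h'⟩ | ⟨h1', h2', hl2⟩) | ⟨h1', h2', h3', h4'⟩)
      · exact h'.elim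
      · have huv : u/2 ≠ v/2 := fun h => hne (by omega)
        rcases hKm _ _ _ hl1 hl2 huv with h | h
        · exact Or.inl (Or.inl (Or.inr ⟨h1, h1', h⟩))
        · exact Or.inr (Or.inl (Or.inr ⟨h1', h1, h⟩))
      · -- v even (v on the point side)
        exact Or.inr (Or.inr ⟨h1', h1, h3', (hKl _ _ hl1).1⟩)
    · -- u even (point side)
      rcases h2' with ((⟨h1', _, h'⟩ | ⟨h1', h2', hl2⟩) | ⟨h1', h2', h3', h4'⟩)
      · exact h'.elim
      · exact Or.inl (Or.inr ⟨h1, h1', h3, (hKl _ _ hl2).1⟩)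
      · -- both on the point side : u = v = 0
        simp only [point, Finset.mem_singleton] at h3 h3'
        exact absurd (by omega : u = v) hne

theorem trans_good : ∀ F : Formula, GoodL (trans F) ∧ (trans F).verts.Nonempty := by
  intro F
  induction F with
  | atom a => exact ⟨goodL_point (fun h => GLabel.noConfusion h) (fun h => GLabel.noConfusion h),
      ⟨0, Finset.mem_singleton_self 0⟩⟩
  | natom a => exact ⟨goodL_point (fun h => GLabel.noConfusion h)
      (fun h => GLabel.noConfusion h), ⟨0, Finset.mem_singleton_self 0⟩⟩
  | one => exact ⟨goodL_point (fun h => GLabel.noConfusion h) (fun h => GLabel.noConfusion h),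
      ⟨0, Finset.mem_singleton_self 0⟩⟩
  | bot => exact ⟨goodL_point (fun h => GLabel.noConfusion h) (fun h => GLabel.noConfusion h),
      ⟨0, Finset.mem_singleton_self 0⟩⟩
  | hole => exact ⟨goodL_point (fun h => GLabel.noConfusion h) (fun h => GLabel.noConfusion h),
      ⟨0, Finset.mem_singleton_self 0⟩⟩
  | parr A B ihA ihB =>
      obtain ⟨x, hx⟩ := ihA.2
      exact ⟨goodL_gparr ihA.1 ihB.1,
        ⟨2*x, Finset.mem_union_left _ (Finset.mem_image.2 ⟨x, hx, rfl⟩)⟩⟩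
  | tens A B ihA ihB =>
      obtain ⟨x, hx⟩ := ihA.2
      exact ⟨goodL_gtens ihA.1 ihB.1,
        ⟨2*x, Finset.mem_union_left _ (Finset.mem_image.2 ⟨x, hx, rfl⟩)⟩⟩
  | bang A ihA =>
      exact ⟨goodL_gseq_point (Or.inl rfl) ihA.1 ihA.2,
        ⟨0, Finset.mem_union_left _ (Finset.mem_image.2 ⟨0, Finset.mem_singleton_self 0,
          by omega⟩)⟩⟩
  | quest A ihA =>
      exact ⟨goodL_gseq_point (Or.inr rfl) ihA.1 ihA.2,
        ⟨0, Finset.mem_union_left _ (Finset.mem_image.2 ⟨0, Finset.mem_singleton_self 0,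
          by omega⟩)⟩⟩

/-- Transport of modality along an isomorphism. -/
theorem iso_modal {G H : LabGraph} (hGmix : G.toMGraph.IsMixed) (hH : GoodL H)
    (hiso : Iso G H) : G.IsModalLab := by
  obtain ⟨f, hbij, hedge, hlab⟩ := hiso
  have hmap : ∀ v ∈ G.verts, f v ∈ H.verts := fun v hv => hbij.mapsTo hv
  constructor
  · intro v hv
    constructor
    · rintro ⟨w, hw⟩
      have hwv : w ∈ G.verts := (hGmix.2.2.2.2.2 v w hw).2
      have hlt : H.lt (f v) (f w) := ((hedge v hv w hwv).2).1 hw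
      rw [← hlab v hv]
      exact (hH.2.2.1 (f v) (hmap v hv)).1 ⟨f w, hlt⟩
    · intro hl
      rw [← hlab v hv] at hl
      obtain ⟨w', hw'⟩ := (hH.2.2.1 (f v) (hmap v hv)).2 hl
      have hw'' : w' ∈ H.verts := (hH.2.1 _ _ hw').2
      obtain ⟨w, hw, hfw⟩ := hbij.surjOn hw''
      have hwG : w ∈ G.verts := hw
      exact ⟨w, ((hedge v hv w hwG).2).2 (hfw ▸ hw')⟩
  · intro u v w hu hv hw hlt1 hlt2 hne
    have hfne : f u ≠ f v := fun h => hne (hbij.injOn hu hv h)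
    rcases hH.2.2.2 (f u) (f v) (f w) (((hedge u hu w hw).2).1 hlt1)
      (((hedge v hv w hw).2).1 hlt2) hfne with h | h
    · exact Or.inl (((hedge u hu v hv).2).2 h)
    · exact Or.inr (((hedge v hv u hu).2).2 h)

/-- Induced labeled subgraph. -/
def induceL (G : LabGraph) (s : Finset ℕ) : LabGraph :=
  ⟨G.toMGraph.induce s, G.lab⟩

theorem induceL_modal {G : LabGraph} (hG : G.IsWeb) (hM : G.IsModalLab) {s : Finset ℕ}
    (hsub : s ⊆ G.verts) (hne : s.Nonempty) (hcl : ∀ v ∈ s, ∀ w, G.lt v w → w ∈ s) :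
    (G.induceL s).IsWeb ∧ (G.induceL s).IsModalLab := by
  refine ⟨MGraph.induce_isRelWeb hG hsub hne, ?_, ?_⟩
  · intro v hv
    have hv' : v ∈ G.verts := hsub hv
    constructor
    · rintro ⟨w, _, _, hw⟩
      exact (hM.1 v hv').1 ⟨w, hw⟩
    · intro hl
      obtain ⟨w, hw⟩ := (hM.1 v hv').2 hl
      exact ⟨w, hv, hcl v hv w hw, hw⟩
  · rintro u v w hu hv hw ⟨_, _, h1⟩ ⟨_, _, h2⟩ hne
    rcases hM.2 u v w (hsub hu) (hsub hv) (hsub hw) h1 h2 hne with h | h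
    · exact Or.inl ⟨hu, hv, h⟩
    · exact Or.inr ⟨hv, hu, h⟩

/-- In a modal web whose incomparability graph is disconnected, there is a vertex
strictly below all the others. -/
theorem seq_min {G : LabGraph} (hG : G.IsWeb) (hM : G.IsModalLab)
    (hdis : ¬ Conn G.verts G.toMGraph.incE) :
    ∃ u ∈ G.verts, (∀ v ∈ G.verts, v ≠ u → G.lt u v) ∧ (∀ v, ¬ G.lt v u) := by
  classical
  obtain ⟨u, hu, hmin⟩ := Finset.exists_min_image G.verts
    (fun v => (G.verts.filter (fun z => G.lt z v)).card) (MGraph.web_nonempty hG)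
  have hnlt : ∀ v, ¬ G.lt v u := by
    intro v hv
    have hvm : v ∈ G.verts := (MGraph.web_ltmem hG v u hv).1
    have hss : G.verts.filter (fun z => G.lt z v) ⊂ G.verts.filter (fun z => G.lt z u) := by
      constructor
      · intro z hz
        rw [Finset.mem_filter] at *
        exact ⟨hz.1, MGraph.web_trans hG z v u hz.2 hv⟩
      · intro hsub'
        have : v ∈ G.verts.filter (fun z => G.lt z v) :=
          hsub' (Finset.mem_filter.2 ⟨hvm, hv⟩)
        exact MGraph.web_ltirrefl hG v (Finset.mem_filter.1 this).2
    exact absurd (hmin v hvm) (by have := Finset.card_lt_card hss; omega)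
  simp only [Conn, not_forall] at hdis
  obtain ⟨p, hp, q, hq, hpq⟩ := hdis
  have rsymm : ∀ {x y : ℕ}, Reach G.verts G.toMGraph.incE x y →
      Reach G.verts G.toMGraph.incE y x :=
    fun h => reach_symm (G.toMGraph.incE_symm) h
  have ht : ∃ t ∈ G.verts, ¬ Reach G.verts G.toMGraph.incE u t := by
    by_cases h1 : Reach G.verts G.toMGraph.incE u p
    · exact ⟨q, hq, fun h2 => hpq ((rsymm h1).trans' h2)⟩
    · exact ⟨p, hp, h1⟩
  obtain ⟨t, htm, hut⟩ := ht
  have hcompt : G.lt u t := by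
    have hne := MGraph.not_reach_ne hut
    have hni := MGraph.not_reach_not_e hu htm hut
    by_cases h1 : G.lt u t
    · exact h1
    · by_cases h2 : G.lt t u
      · exact absurd h2 (hnlt t)
      · exact absurd ⟨hne, h1, h2⟩ hni
  refine ⟨u, hu, ?_, hnlt⟩
  intro v hv hne
  by_contra hnuv
  have hinc : G.toMGraph.incE u v := ⟨fun h => hne h.symm, hnuv, hnlt v⟩
  have hvt : ¬ Reach G.verts G.toMGraph.incE v t :=
    fun h => hut ((MGraph.step_reach hu hv hinc).trans' h)
  have hvtc : G.lt v t ∨ G.lt t v := by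
    have hne' := MGraph.not_reach_ne hvt
    have hni := MGraph.not_reach_not_e hv htm hvt
    by_cases h1 : G.lt v t
    · exact Or.inl h1
    · by_cases h2 : G.lt t v
      · exact Or.inr h2
      · exact absurd ⟨hne', h1, h2⟩ hni
  rcases hvtc with h | h
  · rcases hM.2 u v t hu hv htm hcompt h (fun h' => hne h'.symm) with h' | h'
    · exact hnuv h'
    · exact hnlt v h'
  · exact hnuv (MGraph.web_trans hG u t v hcompt h)

theorem iso_glue_parr {G : LabGraph} {X Y : Finset ℕ}
    (hXY : Disjoint X Y) (hunion : X ∪ Y = G.verts)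
    (hcross : ∀ x ∈ X, ∀ y ∈ Y, G.toMGraph.noEdge x y)
    {H1 H2 : LabGraph} (h1 : Iso (G.induceL X) H1) (h2 : Iso (G.induceL Y) H2) :
    Iso G (H1.gparr H2) := by
  obtain ⟨f1, hbij1, hedge1, hlab1⟩ := h1
  obtain ⟨f2, hbij2, hedge2, hlab2⟩ := h2
  classical
  have hYnX : ∀ v ∈ Y, v ∉ X := fun v hv => Finset.disjoint_right.1 hXY hv
  have hmem : ∀ v ∈ G.verts, v ∈ X ∨ v ∈ Y := by
    intro v hv; rw [← hunion] at hv; exact Finset.mem_union.1 hv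
  refine ⟨fun v => if v ∈ X then 2 * f1 v else 2 * f2 v + 1, ⟨?_, ?_, ?_⟩, ?_, ?_⟩
  · -- maps to
    intro v hv
    rcases hmem v hv with h | h
    · simp only [if_pos h]
      exact Finset.mem_coe.2 (Finset.mem_union_left _
        (Finset.mem_image.2 ⟨f1 v, hbij1.mapsTo h, rfl⟩))
    · simp only [if_neg (hYnX v h)]
      exact Finset.mem_coe.2 (Finset.mem_union_right _
        (Finset.mem_image.2 ⟨f2 v, hbij2.mapsTo h, rfl⟩))
  · -- injective
    intro u hu v hv heq
    rcases hmem u hu with h | h <;> rcases hmem v hv with h' | h'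
    · simp only [if_pos h, if_pos h'] at heq
      exact hbij1.injOn h h' (by omega)
    · simp only [if_pos h, if_neg (hYnX v h')] at heq; omega
    · simp only [if_neg (hYnX u h), if_pos h'] at heq; omega
    · simp only [if_neg (hYnX u h), if_neg (hYnX v h')] at heq
      exact hbij2.injOn h h' (by omega)
  · -- surjective
    intro w hw
    rcases Finset.mem_union.1 (Finset.mem_coe.1 hw) with h | h
    · obtain ⟨n, hn, rfl⟩ := Finset.mem_image.1 h
      obtain ⟨v, hv, hfv⟩ := hbij1.surjOn (Finset.mem_coe.2 hn)
      have hvX : v ∈ X := hv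
      refine ⟨v, ?_, ?_⟩
      · exact Finset.mem_coe.2 (hunion ▸ Finset.mem_union_left _ hvX)
      · simp only [if_pos hvX]; rw [hfv]
    · obtain ⟨n, hn, rfl⟩ := Finset.mem_image.1 h
      obtain ⟨v, hv, hfv⟩ := hbij2.surjOn (Finset.mem_coe.2 hn)
      have hvY : v ∈ Y := hv
      refine ⟨v, ?_, ?_⟩
      · exact Finset.mem_coe.2 (hunion ▸ Finset.mem_union_right _ hvY)
      · simp only [if_neg (hYnX v hvY)]; rw [hfv]
  · -- edges
    intro u hu v hv
    rcases hmem u hu with h | h <;> rcases hmem v hv with h' | h'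
    · simp only [if_pos h, if_pos h']
      constructor
      · constructor
        · intro hr
          exact Or.inl ⟨by omega, by omega, by
            simpa using (hedge1 u h v h').1.1 ⟨h, h', hr⟩⟩
        · rintro (⟨_, _, hr⟩ | ⟨hp, _, _⟩)
          · rw [tm_div, tm_div] at hr
            exact ((hedge1 u h v h').1.2 hr).2.2
          · omega
      · constructor
        · intro hr
          exact Or.inl ⟨by omega, by omega, by
            simpa using (hedge1 u h v h').2.1 ⟨h, h', hr⟩⟩
        · rintro (⟨_, _, hr⟩ | ⟨hp, _, _⟩)
          · rw [tm_div, tm_div] at hr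
            exact ((hedge1 u h v h').2.2 hr).2.2
          · omega
    · simp only [if_pos h, if_neg (hYnX v h')]
      constructor
      · refine iff_of_false (hcross u h v h').1 ?_
        rintro (⟨_, hp, _⟩ | ⟨hp, _, _⟩) <;> omega
      · refine iff_of_false (hcross u h v h').2.2.1 ?_
        rintro (⟨_, hp, _⟩ | ⟨hp, _, _⟩) <;> omega
    · simp only [if_neg (hYnX u h), if_pos h']
      constructor
      · refine iff_of_false (hcross v h' u h).2.1 ?_
        rintro (⟨hp, _, _⟩ | ⟨_, hp, _⟩) <;> omega
      · refine iff_of_false (hcross v h' u h).2.2.2 ?_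
        rintro (⟨hp, _, _⟩ | ⟨_, hp, _⟩) <;> omega
    · simp only [if_neg (hYnX u h), if_neg (hYnX v h')]
      constructor
      · constructor
        · intro hr
          exact Or.inr ⟨by omega, by omega, by
            simpa using (hedge2 u h v h').1.1 ⟨h, h', hr⟩⟩
        · rintro (⟨hp, _, _⟩ | ⟨_, _, hr⟩)
          · omega
          · rw [tmo_div, tmo_div] at hr
            exact ((hedge2 u h v h').1.2 hr).2.2
      · constructor
        · intro hr
          exact Or.inr ⟨by omega, by omega, by
            simpa using (hedge2 u h v h').2.1 ⟨h, h', hr⟩⟩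
        · rintro (⟨hp, _, _⟩ | ⟨_, _, hr⟩)
          · omega
          · rw [tmo_div, tmo_div] at hr
            exact ((hedge2 u h v h').2.2 hr).2.2
  · -- labels
    intro v hv
    rcases hmem v hv with h | h
    · simp only [if_pos h]
      have := hlab1 v h
      simpa [gparr, induceL] using this
    · simp only [if_neg (hYnX v h)]
      have := hlab2 v h
      simpa [gparr, induceL] using this

theorem iso_glue_tens {G : LabGraph} {X Y : Finset ℕ}
    (hXY : Disjoint X Y) (hunion : X ∪ Y = G.verts)
    (hcross : ∀ x ∈ X, ∀ y ∈ Y, G.R x y ∧ G.R y x ∧ ¬ G.lt x y ∧ ¬ G.lt y x)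
    {H1 H2 : LabGraph} (h1 : Iso (G.induceL X) H1) (h2 : Iso (G.induceL Y) H2) :
    Iso G (H1.gtens H2) := by
  obtain ⟨f1, hbij1, hedge1, hlab1⟩ := h1
  obtain ⟨f2, hbij2, hedge2, hlab2⟩ := h2
  classical
  have hYnX : ∀ v ∈ Y, v ∉ X := fun v hv => Finset.disjoint_right.1 hXY hv
  have hmem : ∀ v ∈ G.verts, v ∈ X ∨ v ∈ Y := by
    intro v hv; rw [← hunion] at hv; exact Finset.mem_union.1 hv
  refine ⟨fun v => if v ∈ X then 2 * f1 v else 2 * f2 v + 1, ⟨?_, ?_, ?_⟩, ?_, ?_⟩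
  · intro v hv
    rcases hmem v hv with h | h
    · simp only [if_pos h]
      exact Finset.mem_coe.2 (Finset.mem_union_left _
        (Finset.mem_image.2 ⟨f1 v, hbij1.mapsTo h, rfl⟩))
    · simp only [if_neg (hYnX v h)]
      exact Finset.mem_coe.2 (Finset.mem_union_right _
        (Finset.mem_image.2 ⟨f2 v, hbij2.mapsTo h, rfl⟩))
  · intro u hu v hv heq
    rcases hmem u hu with h | h <;> rcases hmem v hv with h' | h'
    · simp only [if_pos h, if_pos h'] at heq
      exact hbij1.injOn h h' (by omega)
    · simp only [if_pos h, if_neg (hYnX v h')] at heq; omega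
    · simp only [if_neg (hYnX u h), if_pos h'] at heq; omega
    · simp only [if_neg (hYnX u h), if_neg (hYnX v h')] at heq
      exact hbij2.injOn h h' (by omega)
  · intro w hw
    rcases Finset.mem_union.1 (Finset.mem_coe.1 hw) with h | h
    · obtain ⟨n, hn, rfl⟩ := Finset.mem_image.1 h
      obtain ⟨v, hv, hfv⟩ := hbij1.surjOn (Finset.mem_coe.2 hn)
      have hvX : v ∈ X := hv
      refine ⟨v, ?_, ?_⟩
      · exact Finset.mem_coe.2 (hunion ▸ Finset.mem_union_left _ hvX)
      · simp only [if_pos hvX]; rw [hfv]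
    · obtain ⟨n, hn, rfl⟩ := Finset.mem_image.1 h
      obtain ⟨v, hv, hfv⟩ := hbij2.surjOn (Finset.mem_coe.2 hn)
      have hvY : v ∈ Y := hv
      refine ⟨v, ?_, ?_⟩
      · exact Finset.mem_coe.2 (hunion ▸ Finset.mem_union_right _ hvY)
      · simp only [if_neg (hYnX v hvY)]; rw [hfv]
  · intro u hu v hv
    rcases hmem u hu with h | h <;> rcases hmem v hv with h' | h'
    · simp only [if_pos h, if_pos h']
      constructor
      · constructor
        · intro hr
          exact Or.inl (Or.inl ⟨by omega, by omega, by
            simpa using (hedge1 u h v h').1.1 ⟨h, h', hr⟩⟩)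
        · rintro ((⟨_, _, hr⟩ | ⟨hp, _, _⟩) | ⟨_, hp, _, _⟩ | ⟨hp, _, _, _⟩)
          · rw [tm_div, tm_div] at hr
            exact ((hedge1 u h v h').1.2 hr).2.2
          · omega
          · omega
          · omega
      · constructor
        · intro hr
          exact Or.inl ⟨by omega, by omega, by
            simpa using (hedge1 u h v h').2.1 ⟨h, h', hr⟩⟩
        · rintro (⟨_, _, hr⟩ | ⟨hp, _, _⟩)
          · rw [tm_div, tm_div] at hr
            exact ((hedge1 u h v h').2.2 hr).2.2
          · omega
    · simp only [if_pos h, if_neg (hYnX v h')]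
      constructor
      · refine iff_of_true (hcross u h v h').1 ?_
        exact Or.inr (Or.inl ⟨by omega, by omega, by simpa using hbij1.mapsTo h,
          by simpa using hbij2.mapsTo h'⟩)
      · refine iff_of_false (hcross u h v h').2.2.1 ?_
        rintro (⟨_, hp, _⟩ | ⟨hp, _, _⟩) <;> omega
    · simp only [if_neg (hYnX u h), if_pos h']
      constructor
      · refine iff_of_true (hcross v h' u h).2.1 ?_
        exact Or.inr (Or.inr ⟨by omega, by omega, by simpa using hbij2.mapsTo h,
          by simpa using hbij1.mapsTo h'⟩)
      · refine iff_of_false (hcross v h' u h).2.2.2 ?_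
        rintro (⟨hp, _, _⟩ | ⟨_, hp, _⟩) <;> omega
    · simp only [if_neg (hYnX u h), if_neg (hYnX v h')]
      constructor
      · constructor
        · intro hr
          exact Or.inl (Or.inr ⟨by omega, by omega, by
            simpa using (hedge2 u h v h').1.1 ⟨h, h', hr⟩⟩)
        · rintro ((⟨hp, _, _⟩ | ⟨_, _, hr⟩) | ⟨hp, _, _, _⟩ | ⟨_, hp, _, _⟩)
          · omega
          · rw [tmo_div, tmo_div] at hr
            exact ((hedge2 u h v h').1.2 hr).2.2
          · omega
          · omega
      · constructor
        · intro hr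
          exact Or.inr ⟨by omega, by omega, by
            simpa using (hedge2 u h v h').2.1 ⟨h, h', hr⟩⟩
        · rintro (⟨hp, _, _⟩ | ⟨_, _, hr⟩)
          · omega
          · rw [tmo_div, tmo_div] at hr
            exact ((hedge2 u h v h').2.2 hr).2.2
  · intro v hv
    rcases hmem v hv with h | h
    · simp only [if_pos h]
      have := hlab1 v h
      simpa [gtens, gparr, induceL] using this
    · simp only [if_neg (hYnX v h)]
      have := hlab2 v h
      simpa [gtens, gparr, induceL] using this

theorem iso_glue_seq {G : LabGraph} (hG : G.IsWeb) {u₀ : ℕ} (hu₀ : u₀ ∈ G.verts)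
    (hlt : ∀ v ∈ G.verts, v ≠ u₀ → G.lt u₀ v) (hnlt : ∀ v, ¬ G.lt v u₀)
    {H2 : LabGraph} (h2 : Iso (G.induceL (G.verts.erase u₀)) H2) :
    Iso G ((point (G.lab u₀)).gseq H2) := by
  obtain ⟨f2, hbij2, hedge2, hlab2⟩ := h2
  classical
  have hnoR : ∀ v, ¬ G.R u₀ v := by
    intro v hr
    by_cases hv : v = u₀
    · exact MGraph.web_Rirrefl hG u₀ (hv ▸ hr)
    · exact (MGraph.web_R_not_lt hG hr).1
        (hlt v (MGraph.web_Rmem hG _ _ hr).2 hv)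
  have hnoR' : ∀ v, ¬ G.R v u₀ := fun v hr => hnoR v (MGraph.web_Rsymm hG _ _ hr)
  have hmemE : ∀ v ∈ G.verts, v ≠ u₀ → v ∈ G.verts.erase u₀ :=
    fun v hv hne => Finset.mem_erase.2 ⟨hne, hv⟩
  refine ⟨fun v => if v = u₀ then 0 else 2 * f2 v + 1, ⟨?_, ?_, ?_⟩, ?_, ?_⟩
  · intro v hv
    by_cases h : v = u₀
    · simp only [if_pos h]
      exact Finset.mem_coe.2 (Finset.mem_union_left _
        (Finset.mem_image.2 ⟨0, by simp [point], by omega⟩))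
    · simp only [if_neg h]
      exact Finset.mem_coe.2 (Finset.mem_union_right _
        (Finset.mem_image.2 ⟨f2 v, hbij2.mapsTo (hmemE v hv h), rfl⟩))
  · intro u hu v hv heq
    by_cases h : u = u₀ <;> by_cases h' : v = u₀
    · rw [h, h']
    · simp only [if_pos h, if_neg h'] at heq; omega
    · simp only [if_neg h, if_pos h'] at heq; omega
    · simp only [if_neg h, if_neg h'] at heq
      exact hbij2.injOn (hmemE u hu h) (hmemE v hv h') (by omega)
  · intro w hw
    rcases Finset.mem_union.1 (Finset.mem_coe.1 hw) with h | h
    · obtain ⟨n, hn, rfl⟩ := Finset.mem_image.1 h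
      have hn0 : n = 0 := by simpa [point] using hn
      subst hn0
      exact ⟨u₀, hu₀, by beta_reduce; rw [if_pos rfl]⟩
    · obtain ⟨n, hn, rfl⟩ := Finset.mem_image.1 h
      obtain ⟨v, hv, hfv⟩ := hbij2.surjOn (Finset.mem_coe.2 hn)
      have hvE : v ∈ G.verts.erase u₀ := hv
      refine ⟨v, Finset.mem_coe.2 (Finset.mem_erase.1 hvE).2, ?_⟩
      simp only [if_neg (Finset.mem_erase.1 hvE).1]; rw [hfv]
  · intro u hu v hv
    by_cases h : u = u₀ <;> by_cases h' : v = u₀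
    · beta_reduce
      rw [if_pos h, if_pos h']
      constructor
      · refine iff_of_false (by rw [h]; exact hnoR v) ?_
        rintro (⟨_, _, hr⟩ | ⟨hp, _, _⟩)
        · exact hr
        · omega
      · refine iff_of_false (by rw [h, h']; exact MGraph.web_ltirrefl hG u₀) ?_
        rintro ((⟨_, _, hr⟩ | ⟨hp, _, _⟩) | ⟨_, hp, _, _⟩)
        · exact hr
        · omega
        · omega
    · beta_reduce
      rw [if_pos h, if_neg h']
      rw [h]
      constructor
      · refine iff_of_false (hnoR v) ?_
        rintro (⟨_, hp, _⟩ | ⟨hp, _, _⟩) <;> omega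
      · refine iff_of_true (hlt v hv h') ?_
        exact Or.inr ⟨by omega, by omega, by simp [point],
          by simpa using hbij2.mapsTo (hmemE v hv h')⟩
    · beta_reduce
      rw [if_neg h, if_pos h']
      rw [h']
      constructor
      · refine iff_of_false (hnoR' u) ?_
        rintro (⟨hp, _, _⟩ | ⟨_, hp, _⟩) <;> omega
      · refine iff_of_false (hnlt u) ?_
        rintro ((⟨hp, _, _⟩ | ⟨_, hp, _⟩) | ⟨hp, _, _, _⟩) <;> omega
    · simp only [if_neg h, if_neg h']
      have huE := hmemE u hu h
      have hvE := hmemE v hv h'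
      constructor
      · constructor
        · intro hr
          exact Or.inr ⟨by omega, by omega, by
            simpa using (hedge2 u huE v hvE).1.1 ⟨huE, hvE, hr⟩⟩
        · rintro (⟨hp, _, _⟩ | ⟨_, _, hr⟩)
          · omega
          · rw [tmo_div, tmo_div] at hr
            exact ((hedge2 u huE v hvE).1.2 hr).2.2
      · constructor
        · intro hr
          exact Or.inl (Or.inr ⟨by omega, by omega, by
            simpa using (hedge2 u huE v hvE).2.1 ⟨huE, hvE, hr⟩⟩)
        · rintro ((⟨hp, _, _⟩ | ⟨_, _, hr⟩) | ⟨hp, _, _, _⟩)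
          · omega
          · rw [tmo_div, tmo_div] at hr
            exact ((hedge2 u huE v hvE).2.2 hr).2.2
          · omega
  · intro v hv
    by_cases h : v = u₀
    · beta_reduce
      rw [if_pos h, h]
      simp [gseq, gparr, point]
    · beta_reduce
      rw [if_neg h]
      have := hlab2 v (hmemE v hv h)
      simpa [gseq, gparr, induceL] using this

theorem iso_single {G : LabGraph} (hG : G.IsWeb) {v : ℕ} (hv : G.verts = {v}) :
    Iso G (point (G.lab v)) := by
  have hmem : ∀ u ∈ G.verts, u = v := by
    intro u hu; rwa [hv, Finset.mem_singleton] at hu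
  refine ⟨fun _ => 0, ⟨?_, ?_, ?_⟩, ?_, ?_⟩
  · intro x _; simp [point]
  · intro x hx y hy _
    rw [hmem x hx, hmem y hy]
  · intro w hw
    have hw0 : w = 0 := by simpa [point] using hw
    exact ⟨v, by simp [hv], hw0.symm⟩
  · intro u hu w hw
    rw [hmem u hu, hmem w hw]
    constructor
    · exact iff_of_false (MGraph.web_Rirrefl hG v) (fun h => h)
    · exact iff_of_false (MGraph.web_ltirrefl hG v) (fun h => h)
  · intro u hu
    rw [hmem u hu]
    rfl

theorem modal_to_formula : ∀ (n : ℕ) (G : LabGraph), G.verts.card ≤ n → G.IsWeb →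
    G.IsModalLab → ∃ F : Formula, Iso G (trans F) := by
  intro n
  induction n with
  | zero =>
      intro G hc hG _
      have := MGraph.web_nonempty hG
      rw [← Finset.card_pos] at this
      omega
  | succ n ih =>
    intro G hc hG hM
    by_cases h1 : G.verts.card = 1
    · obtain ⟨v, hv⟩ := Finset.card_eq_one.1 h1
      have hvm : v ∈ G.verts := by rw [hv]; exact Finset.mem_singleton_self v
      have hnb : ¬ (G.lab v = .bang ∨ G.lab v = .quest) := by
        intro hl
        obtain ⟨w, hw⟩ := (hM.1 v hvm).2 hl
        have hwm : w ∈ G.verts := (MGraph.web_ltmem hG v w hw).2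
        rw [hv, Finset.mem_singleton] at hwm
        exact MGraph.web_ltirrefl hG v (hwm ▸ hw)
      have hiso := iso_single hG hv
      cases hlab : G.lab v with
      | atom a => exact ⟨Formula.atom a, by rwa [hlab] at hiso⟩
      | natom a => exact ⟨Formula.natom a, by rwa [hlab] at hiso⟩
      | one => exact ⟨Formula.one, by rwa [hlab] at hiso⟩
      | bot => exact ⟨Formula.bot, by rwa [hlab] at hiso⟩
      | hole => exact ⟨Formula.hole, by rwa [hlab] at hiso⟩
      | bang => exact absurd (Or.inl hlab) hnb
      | quest => exact absurd (Or.inr hlab) hnb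
    · have h2 : 2 ≤ G.verts.card := by
        have := MGraph.web_nonempty hG
        rw [← Finset.card_pos] at this
        omega
      rcases MGraph.trichotomy G.verts.card G.toMGraph le_rfl hG h2 with hd | hd | hd
      · -- ⅋ split
        obtain ⟨X, Y, hXne, hYne, hdisj, hun, hcross⟩ := MGraph.split_of_not_conn hd
        have hXsub : X ⊆ G.verts := hun ▸ Finset.subset_union_left
        have hYsub : Y ⊆ G.verts := hun ▸ Finset.subset_union_right
        have hcross' : ∀ x ∈ X, ∀ y ∈ Y, G.toMGraph.noEdge x y :=
          fun x hx y hy => G.toMGraph.not_adjE_noEdge (hcross x hx y hy)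
        have hclX : ∀ v ∈ X, ∀ w, G.lt v w → w ∈ X := by
          intro v hvX w hw
          have hwm : w ∈ G.verts := (MGraph.web_ltmem hG _ _ hw).2
          rw [← hun] at hwm
          rcases Finset.mem_union.1 hwm with h | h
          · exact h
          · exact absurd hw (hcross' v hvX w h).2.2.1
        have hclY : ∀ v ∈ Y, ∀ w, G.lt v w → w ∈ Y := by
          intro v hvY w hw
          have hwm : w ∈ G.verts := (MGraph.web_ltmem hG _ _ hw).2
          rw [← hun] at hwm
          rcases Finset.mem_union.1 hwm with h | h
          · exact absurd hw (hcross' w h v hvY).2.2.2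
          · exact h
        obtain ⟨hWX, hMX⟩ := induceL_modal hG hM hXsub hXne hclX
        obtain ⟨hWY, hMY⟩ := induceL_modal hG hM hYsub hYne hclY
        have hXlt : X.card < G.verts.card := by
          obtain ⟨y, hy⟩ := hYne
          exact Finset.card_lt_card ⟨hXsub,
            fun hall => Finset.disjoint_right.1 hdisj hy (hall (hYsub hy))⟩
        have hYlt : Y.card < G.verts.card := by
          obtain ⟨x, hx⟩ := hXne
          exact Finset.card_lt_card ⟨hYsub,
            fun hall => Finset.disjoint_left.1 hdisj hx (hall (hXsub hx))⟩
        obtain ⟨F1, hF1⟩ := ih (G.induceL X) (by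
          show X.card ≤ n; omega) hWX hMX
        obtain ⟨F2, hF2⟩ := ih (G.induceL Y) (by
          show Y.card ≤ n; omega) hWY hMY
        exact ⟨Formula.parr F1 F2, iso_glue_parr hdisj hun hcross' hF1 hF2⟩
      · -- ⊗ split
        obtain ⟨X, Y, hXne, hYne, hdisj, hun, hcross⟩ := MGraph.split_of_not_conn hd
        have hXsub : X ⊆ G.verts := hun ▸ Finset.subset_union_left
        have hYsub : Y ⊆ G.verts := hun ▸ Finset.subset_union_right
        have hcross' : ∀ x ∈ X, ∀ y ∈ Y, G.R x y ∧ G.R y x ∧ ¬ G.lt x y ∧ ¬ G.lt y x := by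
          intro x hx y hy
          have hne : x ≠ y := fun h => Finset.disjoint_left.1 hdisj hx (h ▸ hy)
          have hR : G.R x y := by
            by_contra hc
            by_cases hc2 : G.R y x
            · exact hc (MGraph.web_Rsymm hG _ _ hc2)
            · exact hcross x hx y hy ⟨hne, hc, hc2⟩
          exact ⟨hR, MGraph.web_Rsymm hG _ _ hR, (MGraph.web_R_not_lt hG hR).1,
            (MGraph.web_R_not_lt hG hR).2.1⟩
        have hclX : ∀ v ∈ X, ∀ w, G.lt v w → w ∈ X := by
          intro v hvX w hw
          have hwm : w ∈ G.verts := (MGraph.web_ltmem hG _ _ hw).2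
          rw [← hun] at hwm
          rcases Finset.mem_union.1 hwm with h | h
          · exact h
          · exact absurd hw (hcross' v hvX w h).2.2.1
        have hclY : ∀ v ∈ Y, ∀ w, G.lt v w → w ∈ Y := by
          intro v hvY w hw
          have hwm : w ∈ G.verts := (MGraph.web_ltmem hG _ _ hw).2
          rw [← hun] at hwm
          rcases Finset.mem_union.1 hwm with h | h
          · exact absurd hw (hcross' w h v hvY).2.2.2
          · exact h
        obtain ⟨hWX, hMX⟩ := induceL_modal hG hM hXsub hXne hclX
        obtain ⟨hWY, hMY⟩ := induceL_modal hG hM hYsub hYne hclY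
        have hXlt : X.card < G.verts.card := by
          obtain ⟨y, hy⟩ := hYne
          exact Finset.card_lt_card ⟨hXsub,
            fun hall => Finset.disjoint_right.1 hdisj hy (hall (hYsub hy))⟩
        have hYlt : Y.card < G.verts.card := by
          obtain ⟨x, hx⟩ := hXne
          exact Finset.card_lt_card ⟨hYsub,
            fun hall => Finset.disjoint_left.1 hdisj hx (hall (hXsub hx))⟩
        obtain ⟨F1, hF1⟩ := ih (G.induceL X) (by
          show X.card ≤ n; omega) hWX hMX
        obtain ⟨F2, hF2⟩ := ih (G.induceL Y) (by
          show Y.card ≤ n; omega) hWY hMY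
        exact ⟨Formula.tens F1 F2, iso_glue_tens hdisj hun hcross' hF1 hF2⟩
      · -- ◁ split
        obtain ⟨u₀, hu₀m, hltall, hnlt⟩ := seq_min hG hM hd
        have hlabm : G.lab u₀ = .bang ∨ G.lab u₀ = .quest := by
          apply (hM.1 u₀ hu₀m).1
          obtain ⟨v, hvm, hvne⟩ := Finset.exists_mem_ne (s := G.verts) (by omega) u₀
          exact ⟨v, hltall v hvm hvne⟩
        have hsub' : G.verts.erase u₀ ⊆ G.verts := Finset.erase_subset _ _
        have hcard' : (G.verts.erase u₀).card = G.verts.card - 1 :=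
          Finset.card_erase_of_mem hu₀m
        have hne' : (G.verts.erase u₀).Nonempty := Finset.card_pos.1 (by omega)
        have hcl : ∀ v ∈ G.verts.erase u₀, ∀ w, G.lt v w → w ∈ G.verts.erase u₀ := by
          intro v _ w hw
          refine Finset.mem_erase.2 ⟨?_, (MGraph.web_ltmem hG _ _ hw).2⟩
          rintro rfl
          exact hnlt v hw
        obtain ⟨hW2, hM2⟩ := induceL_modal hG hM hsub' hne' hcl
        obtain ⟨F2, hF2⟩ := ih (G.induceL (G.verts.erase u₀)) (by
          show (G.verts.erase u₀).card ≤ n; omega) hW2 hM2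
        have hiso := iso_glue_seq hG hu₀m hltall hnlt hF2
        rcases hlabm with hl | hl
        · exact ⟨Formula.bang F2, by rwa [hl] at hiso⟩
        · exact ⟨Formula.quest F2, by rwa [hl] at hiso⟩

end LabGraph

end Aux

/-- A labeled relation web is isomorphic to the translation of some
formula `F` if and only if it is modal. -/
theorem formula_iff_modal (G : LabGraph) (hG : G.IsWeb) :
    (∃ F : Formula, LabGraph.Iso G (LabGraph.trans F)) ↔ G.IsModalLab := by
  constructor
  · rintro ⟨F, hiso⟩
    exact LabGraph.iso_modal hG.1 (LabGraph.trans_good F).1 hiso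
  · intro hM
    exact LabGraph.modal_to_formula G.verts.card G le_rfl hG hM
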